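/- arXiv:1111.4729 — 7 statements merged into one kernel-verified Lean document; each statement's English description precedes it below -/
import Mathlib

section
/- An aperiodic signed directed graph cannot be both balanced and anti-balanced. -/
open Matrix Filter Topology Finset

/-- A directed walk of given length in a digraph with edge relation `E`. -/
def DiWalk {V : Type*} (E : V → V → Prop) : ℕ → V → V → Prop
  | 0, i, j => i = j
  | n + 1, i, j => ∃ k, E i k ∧ DiWalk E n k j

/-- Strong connectivity: every node reaches every other node by some walk. -/
def DiStronglyConnected {V : Type*} (E : V → V → Prop) : Prop :=
  ∀ i j : V, ∃ n : ℕ, DiWalk E n i j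

/-- Aperiodicity: the gcd of the lengths of all (positive-length) closed walks is 1. -/
def DiAperiodic {V : Type*} (E : V → V → Prop) : Prop :=
  ∀ d : ℕ, (∀ n : ℕ, 0 < n → (∃ i, DiWalk E n i i) → d ∣ n) → d = 1

/-- A signed directed walk of given length and total sign `s` (product of edge signs). -/
def SWalk {V : Type*} (E : V → V → Prop) (σ : V → V → ℤ) : ℕ → ℤ → V → V → Prop
  | 0, s, i, j => i = j ∧ s = 1
  | n + 1, s, i, j => ∃ k s', E i k ∧ SWalk E σ n s' k j ∧ s = σ i k * s'

/-- Balanced signed digraph: a bipartition with positive edges inside parts,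
negative edges across. -/
def SBalancedG {V : Type*} (E : V → V → Prop) (σ : V → V → ℤ) : Prop :=
  ∃ S : Set V, ∀ i j, E i j → (σ i j = 1 ↔ (i ∈ S ↔ j ∈ S))

/-- Anti-balanced signed digraph: negative edges inside parts, positive edges across. -/
def SAntiBalancedG {V : Type*} (E : V → V → Prop) (σ : V → V → ℤ) : Prop :=
  ∃ S : Set V, ∀ i j, E i j → (σ i j = -1 ↔ (i ∈ S ↔ j ∈ S))

lemma xor_aux (a b c d : Prop) (h1 : a ↔ c) (h2 : ¬(b ↔ d)) : ¬((a ↔ b) ↔ (c ↔ d)) := by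
  tauto

lemma xor_aux' (a b c d : Prop) (h1 : a ↔ c) (h2 : ¬(b ↔ d)) : ¬((b ↔ a) ↔ (d ↔ c)) := by
  tauto

/-- An aperiodic signed digraph cannot be both balanced and anti-balanced. -/
theorem aperiodic_not_balanced_and_antibalanced {V : Type*}
    (E : V → V → Prop) (σ : V → V → ℤ)
    (hσ : ∀ i j, E i j → σ i j = 1 ∨ σ i j = -1)
    (hap : DiAperiodic E)
    (hbal : SBalancedG E σ) (hanti : SAntiBalancedG E σ) : False := by
  obtain ⟨S, hS⟩ := hbal
  obtain ⟨T, hT⟩ := hanti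
  set f : V → Prop := fun v => (v ∈ S ↔ v ∈ T) with hf
  have hedge : ∀ i j, E i j → ¬ (f i ↔ f j) := by
    intro i j hij
    have h1 := hS i j hij
    have h2 := hT i j hij
    have h3 := hσ i j hij
    have hne : (1 : ℤ) ≠ -1 := by decide
    rcases h3 with h | h
    · have hB := h1.mp h
      have hA : ¬ (i ∈ T ↔ j ∈ T) := fun hx => by have := h2.mpr hx; omega
      exact xor_aux _ _ _ _ hB hA
    · have hA := h2.mp h
      have hB : ¬ (i ∈ S ↔ j ∈ S) := fun hx => by have := h1.mpr hx; omega
      exact xor_aux' _ _ _ _ hA hB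
  have key : ∀ n i j, DiWalk E n i j → (f i ↔ (f j ↔ Even n)) := by
    intro n
    induction n with
    | zero =>
      intro i j hw
      cases hw
      simp
    | succ n ih =>
      intro i j hw
      obtain ⟨k, hik, hkj⟩ := hw
      have h1 := hedge i k hik
      have h2 := ih k j hkj
      have h3 : Even (n + 1) ↔ ¬ Even n := Nat.even_add_one
      tauto
  have h2 : (2 : ℕ) = 1 := by
    apply hap
    intro n hn ⟨i, hw⟩
    have := key n i i hw
    have heven : Even n := by tauto
    exact even_iff_two_dvd.mp heven
  exact absurd h2 (by decide)
end

section
/- If G is an ergodic signed digraph that is strictly unbalanced (neither balanced nor anti-balanced), then there exist two vertices i and j and two directed paths from i to j of the same length but opposite signs. -/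
open Matrix Filter Topology Finset

theorem diwalk_swalk {V : Type*} (E : V → V → Prop) (σ : V → V → ℤ) {n : ℕ} {i j : V} :
    DiWalk E n i j → ∃ s, SWalk E σ n s i j := by
  induction n generalizing i with
  | zero => exact fun h => ⟨1, h, rfl⟩
  | succ n ih =>
    rintro ⟨k, hk, hw⟩
    obtain ⟨s, hs⟩ := ih hw
    exact ⟨σ i k * s, k, s, hk, hs, rfl⟩

theorem swalk_sign {V : Type*} {E : V → V → Prop} {σ : V → V → ℤ}
    (hσ : ∀ i j, E i j → σ i j = 1 ∨ σ i j = -1) {n : ℕ} {s : ℤ} {i j : V} :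
    SWalk E σ n s i j → s = 1 ∨ s = -1 := by
  induction n generalizing i s with
  | zero => exact fun h => Or.inl h.2
  | succ n ih =>
    rintro ⟨k, s', hk, hw, rfl⟩
    rcases hσ i k hk with h | h <;> rcases ih hw with h' | h' <;> rw [h, h'] <;> norm_num

theorem swalk_append {V : Type*} {E : V → V → Prop} {σ : V → V → ℤ}
    {n m : ℕ} {s t : ℤ} {i j k : V} :
    SWalk E σ n s i j → SWalk E σ m t j k → SWalk E σ (n + m) (s * t) i k := by
  induction n generalizing i s with
  | zero => rintro ⟨rfl, rfl⟩ h; simpa using h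
  | succ n ih =>
    rintro ⟨l, s', hl, hw, rfl⟩ h
    rw [Nat.succ_add]
    exact ⟨l, s' * t, hl, ih hw h, by ring⟩

theorem swalk_edge {V : Type*} {E : V → V → Prop} {σ : V → V → ℤ} {i j : V}
    (h : E i j) : SWalk E σ 1 (σ i j) i j :=
  ⟨j, 1, h, ⟨rfl, rfl⟩, (mul_one _).symm⟩

theorem swalk_pow {V : Type*} {E : V → V → Prop} {σ : V → V → ℤ}
    {n : ℕ} {s : ℤ} {v : V} (h : SWalk E σ n s v v) (q : ℕ) :
    SWalk E σ (q * n) (s ^ q) v v := by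
  induction q with
  | zero => rw [Nat.zero_mul, pow_zero]; exact ⟨rfl, rfl⟩
  | succ q ih =>
    have := swalk_append ih h
    rw [Nat.succ_mul, pow_succ]
    exact this

/-- In an ergodic strictly unbalanced signed digraph there exist two nodes and
two directed paths between them of the same length but opposite signs. -/
theorem strictly_unbalanced_equal_length_opposite_signs {V : Type*}
    (E : V → V → Prop) (σ : V → V → ℤ)
    (hσ : ∀ i j, E i j → σ i j = 1 ∨ σ i j = -1)
    (hsc : DiStronglyConnected E) (hap : DiAperiodic E)
    (hnb : ¬ SBalancedG E σ) (hna : ¬ SAntiBalancedG E σ) :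
    ∃ (i j : V) (n : ℕ), SWalk E σ n 1 i j ∧ SWalk E σ n (-1) i j := by
  classical
  by_contra hcon
  -- uniqueness of signs
  have uniq : ∀ (n : ℕ) (i j : V) (s t : ℤ),
      SWalk E σ n s i j → SWalk E σ n t i j → s = t := by
    intro n i j s t hs ht
    rcases swalk_sign hσ hs with rfl | rfl <;> rcases swalk_sign hσ ht with rfl | rfl
    · rfl
    · exact absurd ⟨i, j, n, hs, ht⟩ hcon
    · exact absurd ⟨i, j, n, ht, hs⟩ hcon
    · rfl
  have hV : Nonempty V := by
    by_contra h
    exact hnb ⟨∅, fun i _ _ => (h ⟨i⟩).elim⟩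
  obtain ⟨v⟩ := hV
  set L : ℕ → Prop := fun n => 0 < n ∧ ∃ s, SWalk E σ n s v v with hLdef
  have Ladd : ∀ {n m : ℕ}, L n → L m → L (n + m) := by
    rintro n m ⟨hn, s, hs⟩ ⟨hm, t, ht⟩
    exact ⟨by omega, s * t, swalk_append hs ht⟩
  have Lmul : ∀ (q n : ℕ), 0 < q → L n → L (q * n) := by
    rintro q n hq ⟨hn, s, hs⟩
    exact ⟨by positivity, s ^ q, swalk_pow hs q⟩
  -- L is nonempty
  have Lne : ∃ n, L n := by
    by_contra hL
    push_neg at hL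
    refine absurd (hap 2 ?_) (by norm_num)
    rintro n hn ⟨i, hw⟩
    exfalso
    obtain ⟨α, hα⟩ := hsc v i
    obtain ⟨β, hβ⟩ := hsc i v
    obtain ⟨s1, h1⟩ := diwalk_swalk E σ hα
    obtain ⟨s2, h2⟩ := diwalk_swalk E σ hw
    obtain ⟨s3, h3⟩ := diwalk_swalk E σ hβ
    exact hL (α + (n + β)) ⟨by omega, _, swalk_append h1 (swalk_append h2 h3)⟩
  -- the "difference" set
  set T : ℕ → Prop := fun k => 0 < k ∧ ∃ a b, L a ∧ (L b ∨ b = 0) ∧ a = b + k with hTdef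
  have hTne : ∃ k, T k := by
    obtain ⟨n, hn⟩ := Lne
    exact ⟨n, hn.1, n, 0, hn, Or.inr rfl, (Nat.zero_add n).symm⟩
  set d : ℕ := Nat.find hTne with hddef
  have hdT : T d := Nat.find_spec hTne
  have dpos : 0 < d := hdT.1
  obtain ⟨a0, b0, ha0, hb0, hab⟩ := hdT.2
  -- d divides all elements of L
  have hdivL : ∀ m, L m → d ∣ m := by
    intro m hm
    rcases Nat.eq_zero_or_pos (m % d) with hr | hr
    · exact Nat.dvd_of_mod_eq_zero hr
    · exfalso
      set q := m / d with hq
      set r := m % d with hrdef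
      have hrd : r < d := Nat.mod_lt _ dpos
      have hmeq : m = q * d + r := by rw [Nat.mul_comm]; exact (Nat.div_add_mod m d).symm
      have hTr : T r := by
        refine ⟨hr, m + q * b0, q * a0, ?_, ?_, ?_⟩
        · rcases hb0 with hb | rfl
          · rcases Nat.eq_zero_or_pos q with h0 | h0
            · simpa [h0] using hm
            · exact Ladd hm (Lmul q b0 h0 hb)
          · simpa using hm
        · rcases Nat.eq_zero_or_pos q with h0 | h0
          · right; simp [h0]
          · left; exact Lmul q a0 h0 ha0
        · rw [hab, Nat.mul_add, hmeq]; ring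
      exact Nat.find_min hTne hrd hTr
  -- d divides the length of every closed walk, hence d = 1
  have hd1 : d = 1 := by
    apply hap
    rintro n hn ⟨i, hw⟩
    obtain ⟨α, hα⟩ := hsc v i
    obtain ⟨β, hβ⟩ := hsc i v
    obtain ⟨s1, h1⟩ := diwalk_swalk E σ hα
    obtain ⟨s2, h2⟩ := diwalk_swalk E σ hw
    obtain ⟨s3, h3⟩ := diwalk_swalk E σ hβ
    have hL1 : L (α + (n + β)) := ⟨by omega, _, swalk_append h1 (swalk_append h2 h3)⟩
    have dd1 := hdivL _ hL1
    rcases Nat.eq_zero_or_pos (α + β) with h0 | hpos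
    · have hα0 : α = 0 := by omega
      have hβ0 : β = 0 := by omega
      rw [hα0, hβ0] at dd1
      simpa using dd1
    · have hL2 : L (α + β) := ⟨hpos, s1 * s3, swalk_append h1 h3⟩
      have dd2 := hdivL _ hL2
      have dd1' : d ∣ (α + β) + n := by
        rwa [show (α + β) + n = α + (n + β) by ring]
      exact (Nat.dvd_add_right dd2).mp dd1'
  -- consecutive elements of L
  have hcons : ∃ x, L x ∧ L (x + 1) := by
    rw [hd1] at hab
    rcases hb0 with hb | rfl
    · refine ⟨b0, hb, ?_⟩
      rwa [hab] at ha0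
    · have h1 : L 1 := by rw [hab] at ha0; simpa using ha0
      exact ⟨1, h1, Ladd h1 h1⟩
  obtain ⟨x, hx, hx1⟩ := hcons
  obtain ⟨-, s1, w1⟩ := hx
  obtain ⟨-, s2, w2⟩ := hx1
  have hs1 : s1 = 1 ∨ s1 = -1 := swalk_sign hσ w1
  have hs2 : s2 = 1 ∨ s2 = -1 := swalk_sign hσ w2
  set e : ℤ := s1 * s2 with hedef
  have hepm : e = 1 ∨ e = -1 := by
    rcases hs1 with rfl | rfl <;> rcases hs2 with rfl | rfl <;> norm_num [hedef]
  have hpowpm : ∀ m : ℕ, e ^ m = 1 ∨ e ^ m = -1 := by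
    intro m
    rcases hepm with h | h
    · left; rw [h]; simp
    · rw [h]; rcases Nat.even_or_odd m with hm | hm
      · left; exact hm.neg_one_pow
      · right; exact hm.neg_one_pow
  -- sign of every closed walk at v is e^n
  have hclosed : ∀ (n : ℕ) (t : ℤ), SWalk E σ n t v v → t = e ^ n := by
    intro n t ht
    have A : SWalk E σ (n * (x + 1)) (t * s1 ^ n) v v := by
      have h := swalk_append ht (swalk_pow w1 n)
      rwa [show n + n * x = n * (x + 1) by ring] at h
    have B : SWalk E σ (n * (x + 1)) (s2 ^ n) v v := swalk_pow w2 n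
    have hAB := uniq _ _ _ _ _ A B
    have hsq : s1 ^ n * s1 ^ n = 1 := by
      rcases hs1 with rfl | rfl
      · simp
      · rw [← mul_pow]; norm_num
    calc t = t * (s1 ^ n * s1 ^ n) := by rw [hsq, mul_one]
      _ = (t * s1 ^ n) * s1 ^ n := by ring
      _ = s2 ^ n * s1 ^ n := by rw [hAB]
      _ = (s1 * s2) ^ n := by rw [mul_pow]; ring
      _ = e ^ n := rfl
  -- return walks define ε
  have hret : ∀ i : V, ∃ (r : ℕ) (w : ℤ), SWalk E σ r w i v := by
    intro i
    obtain ⟨r, hr⟩ := hsc i v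
    obtain ⟨w, hw⟩ := diwalk_swalk E σ hr
    exact ⟨r, w, hw⟩
  choose r w hw using hret
  set ε : V → ℤ := fun i => e ^ (r i) * w i with hεdef
  have hεpm : ∀ i, ε i = 1 ∨ ε i = -1 := by
    intro i
    have h1 := hpowpm (r i)
    have h2 := swalk_sign hσ (hw i)
    rcases h1 with h | h <;> rcases h2 with h' | h' <;> simp [hεdef, h, h']
  -- forward walk signs
  have hfwd : ∀ (i : V) (m : ℕ) (t : ℤ), SWalk E σ m t v i → t = e ^ m * ε i := by
    intro i m t ht
    have hclose := hclosed _ _ (swalk_append ht (hw i))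
    have hwpm := swalk_sign hσ (hw i)
    have hww : w i * w i = 1 := by rcases hwpm with h | h <;> rw [h] <;> norm_num
    have h2 : t = e ^ (m + r i) * w i := by
      have h3 : t * w i * w i = e ^ (m + r i) * w i := by rw [hclose]
      rwa [mul_assoc, hww, mul_one] at h3
    rw [h2, pow_add, mul_assoc]
  -- edge signs
  have hedge : ∀ i j, E i j → σ i j = e * (ε i * ε j) := by
    intro i j hij
    obtain ⟨m, hm⟩ := hsc v i
    obtain ⟨t, ht⟩ := diwalk_swalk E σ hm
    have htv : t = e ^ m * ε i := hfwd i m t ht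
    have hcomp : SWalk E σ (m + 1) (t * σ i j) v j := swalk_append ht (swalk_edge hij)
    have h2 : t * σ i j = e ^ (m + 1) * ε j := hfwd j _ _ hcomp
    rw [htv, pow_succ] at h2
    have hP := hpowpm m
    have hi := hεpm i
    have hj := hεpm j
    have hs := hσ i j hij
    rcases hepm with he | he <;>
      rcases hP with h | h <;> rcases hi with h' | h' <;> rcases hj with h'' | h'' <;>
      rcases hs with h''' | h''' <;>
      rw [h] at h2 <;> rw [he, h', h'', h'''] at h2 ⊢ <;> norm_num at h2 <;> norm_num
  -- conclude balanced or anti-balanced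
  rcases hepm with he | he
  · apply hnb
    refine ⟨{i | ε i = 1}, fun i j hij => ?_⟩
    have h := hedge i j hij
    rw [he, one_mul] at h
    rcases hεpm i with hi | hi <;> rcases hεpm j with hj | hj <;>
      simp [Set.mem_setOf_eq, h, hi, hj]
  · apply hna
    refine ⟨{i | ε i = 1}, fun i j hij => ?_⟩
    have h := hedge i j hij
    rw [he] at h
    rcases hεpm i with hi | hi <;> rcases hεpm j with hj | hj <;>
      simp [Set.mem_setOf_eq, h, hi, hj]
end

section
/- Let G be an ergodic anti-balanced signed digraph with partition S, S̄, signed transition matrix P, and stationary distribution π of the unsigned chain. Then lim_{t→∞} P^{2t} = 1̂_S π̂_S^T and lim_{t→∞} P^{2t+1} = -1̂_S π̂_S^T. -/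
open Matrix Filter Topology Finset

/-- Weighted out-degree `d_i = Σ_j |A_{ij}|` of a signed weighted digraph. -/
noncomputable def sdeg {V : Type*} [Fintype V] (A : Matrix V V ℝ) (i : V) : ℝ :=
  ∑ j, |A i j|

/-- The signed transition matrix `P = D⁻¹A`. -/
noncomputable def signedP {V : Type*} [Fintype V] (A : Matrix V V ℝ) : Matrix V V ℝ :=
  Matrix.of fun i j => A i j / sdeg A i

/-- The unsigned transition matrix `P̄ = D⁻¹|A|`. -/
noncomputable def unsignedP {V : Type*} [Fintype V] (A : Matrix V V ℝ) : Matrix V V ℝ :=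
  Matrix.of fun i j => |A i j| / sdeg A i

/-- The vector `g⁻ = D⁻¹A⁻1` of weighted fractions of outgoing negative edges. -/
noncomputable def gneg {V : Type*} [Fintype V] (A : Matrix V V ℝ) (i : V) : ℝ :=
  (∑ j, max (-(A i j)) 0) / sdeg A i

/-- Ergodicity of the underlying (unsigned) digraph of a weighted signed digraph. -/
def SErgodic {V : Type*} (A : Matrix V V ℝ) : Prop :=
  DiStronglyConnected (fun i j => A i j ≠ 0) ∧ DiAperiodic (fun i j => A i j ≠ 0)

/-- Balanced weighted signed digraph. -/
def SBalancedM {V : Type*} (A : Matrix V V ℝ) : Prop :=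
  ∃ S : Set V, ∀ i j, A i j ≠ 0 → (0 < A i j ↔ (i ∈ S ↔ j ∈ S))

/-- Anti-balanced weighted signed digraph. -/
def SAntiBalancedM {V : Type*} (A : Matrix V V ℝ) : Prop :=
  ∃ S : Set V, ∀ i j, A i j ≠ 0 → (A i j < 0 ↔ (i ∈ S ↔ j ∈ S))

/-- `π` is a stationary distribution of the unsigned chain `P̄ = D⁻¹|A|`. -/
def SStationary {V : Type*} [Fintype V] (A : Matrix V V ℝ) (π : V → ℝ) : Prop :=
  (∀ i, 0 ≤ π i) ∧ (∑ i, π i = 1) ∧ ∀ j, ∑ i, π i * unsignedP A i j = π j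


section AntibalancedAux

lemma diwalk_trans' {V : Type*} {E : V → V → Prop} :
    ∀ {n m : ℕ} {i j k : V}, DiWalk E n i j → DiWalk E m j k → DiWalk E (n + m) i k := by
  intro n
  induction n with
  | zero =>
    intro m i j k h1 h2
    have : i = j := h1
    subst this
    simpa using h2
  | succ n ih =>
    rintro m i j k ⟨l, hl, hw⟩ h2
    have hm : n + 1 + m = (n + m) + 1 := by omega
    rw [hm]
    exact ⟨l, hl, ih hw h2⟩

lemma key_semigroup' (L : Set ℕ) (h0 : 0 ∈ L) (hadd : ∀ a ∈ L, ∀ b ∈ L, a + b ∈ L)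
    (hgcd : ∀ d : ℕ, (∀ n ∈ L, d ∣ n) → d = 1) : ∃ N : ℕ, ∀ n, N ≤ n → n ∈ L := by
  have hmul : ∀ (k n : ℕ), n ∈ L → k * n ∈ L := by
    intro k
    induction k with
    | zero => intro n _; simpa using h0
    | succ k ih =>
      intro n hn
      have : (k + 1) * n = k * n + n := by ring
      rw [this]
      exact hadd _ (ih n hn) _ hn
  let H : AddSubgroup ℤ :=
    { carrier := {z | ∃ p ∈ L, ∃ q ∈ L, z = (p : ℤ) - q}
      add_mem' := by
        rintro x y ⟨p, hp, q, hq, rfl⟩ ⟨p', hp', q', hq', rfl⟩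
        exact ⟨p + p', hadd _ hp _ hp', q + q', hadd _ hq _ hq', by push_cast; ring⟩
      zero_mem' := ⟨0, h0, 0, h0, by simp⟩
      neg_mem' := by
        rintro x ⟨p, hp, q, hq, rfl⟩
        exact ⟨q, hq, p, hp, by ring⟩ }
  obtain ⟨g, hg⟩ := Int.subgroup_cyclic H
  have hdvd : ∀ n ∈ L, g.natAbs ∣ n := by
    intro n hn
    have hmem : (n : ℤ) ∈ H := ⟨n, hn, 0, h0, by simp⟩
    rw [hg, AddSubgroup.mem_closure_singleton] at hmem
    obtain ⟨k, hk⟩ := hmem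
    have : g ∣ (n : ℤ) := ⟨k, by rw [← hk, smul_eq_mul]; ring⟩
    have := Int.natAbs_dvd_natAbs.mpr this
    simpa using this
  have h1 : g.natAbs = 1 := hgcd _ hdvd
  have hgH : g ∈ H := by
    rw [hg]; exact AddSubgroup.subset_closure (Set.mem_singleton g)
  have h1H : (1 : ℤ) ∈ H := by
    rcases Int.natAbs_eq g with h | h
    · rw [h1] at h; rwa [h] at hgH
    · rw [h1] at h
      have := H.neg_mem hgH
      rw [h] at this; simpa using this
  obtain ⟨p, hp, q, hq, hpq⟩ := h1H
  have hp' : p = q + 1 := by omega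
  subst hp'
  refine ⟨q * q + 1, fun n hn => ?_⟩
  rcases Nat.eq_zero_or_pos q with hq0 | hq0
  · subst hq0
    have : n * 1 ∈ L := hmul n 1 hp
    simpa using this
  · set c := n / q with hc
    set r := n % q with hr
    have hrq : r < q := Nat.mod_lt _ hq0
    have hcq : q ≤ c := by
      rw [hc, Nat.le_div_iff_mul_le hq0]
      nlinarith
    have hrc : r ≤ c := by omega
    have hmem : (c - r) * q + r * (q + 1) ∈ L := hadd _ (hmul _ _ hq) _ (hmul _ _ hp)
    have hkey : (c - r) * q + r * (q + 1) = n := by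
      have hdm : q * c + r = n := Nat.div_add_mod n q
      zify [hrc]
      push_cast [← hdm]
      ring
    rwa [hkey] at hmem

section
variable {V : Type*} [Fintype V] [DecidableEq V] (A : Matrix V V ℝ)

omit [DecidableEq V] in
lemma ab_edge_exists (hsc : DiStronglyConnected (fun i j => A i j ≠ 0))
    (hap : DiAperiodic (fun i j => A i j ≠ 0)) (i : V) : ∃ k, A i k ≠ 0 := by
  have hcw : ∃ n : ℕ, 0 < n ∧ ∃ w, DiWalk (fun i j => A i j ≠ 0) n w w := by
    by_contra h
    push_neg at h
    have := hap 2 (fun n hn hex => absurd hex (by simpa using h n hn))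
    omega
  obtain ⟨n, hn, w, hw⟩ := hcw
  obtain ⟨n', rfl⟩ : ∃ n', n = n' + 1 := ⟨n - 1, by omega⟩
  obtain ⟨k, hk, -⟩ := hw
  obtain ⟨m, hm⟩ := hsc i w
  cases m with
  | zero => exact ⟨k, by rwa [show i = w from hm]⟩
  | succ m => obtain ⟨k', hk', -⟩ := hm; exact ⟨k', hk'⟩

omit [DecidableEq V] in
lemma ab_sdeg_pos (hsc : DiStronglyConnected (fun i j => A i j ≠ 0))
    (hap : DiAperiodic (fun i j => A i j ≠ 0)) (i : V) : 0 < sdeg A i := by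
  obtain ⟨k, hk⟩ := ab_edge_exists A hsc hap i
  exact Finset.sum_pos' (fun j _ => abs_nonneg _) ⟨k, Finset.mem_univ k, abs_pos.2 hk⟩

omit [DecidableEq V] in
lemma ab_unsignedP_nonneg (hd : ∀ i, 0 < sdeg A i) (i j : V) : 0 ≤ unsignedP A i j :=
  div_nonneg (abs_nonneg _) (hd i).le

omit [DecidableEq V] in
lemma ab_unsignedP_row_sum (hd : ∀ i, 0 < sdeg A i) (i : V) : ∑ j, unsignedP A i j = 1 := by
  unfold unsignedP
  simp only [Matrix.of_apply]
  rw [← Finset.sum_div]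
  exact div_self (hd i).ne'

lemma ab_unsignedP_pow_nonneg (hd : ∀ i, 0 < sdeg A i) :
    ∀ (n : ℕ) (i j : V), 0 ≤ (unsignedP A ^ n) i j := by
  intro n
  induction n with
  | zero =>
    intro i j
    rcases eq_or_ne i j with rfl | h
    · simp [Matrix.one_apply_eq]
    · simp [Matrix.one_apply_ne h]
  | succ n ih =>
    intro i j
    rw [pow_succ', Matrix.mul_apply]
    exact Finset.sum_nonneg fun k _ => mul_nonneg (ab_unsignedP_nonneg A hd i k) (ih k j)

lemma ab_unsignedP_pow_row_sum (hd : ∀ i, 0 < sdeg A i) :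
    ∀ (n : ℕ) (i : V), ∑ j, (unsignedP A ^ n) i j = 1 := by
  intro n
  induction n with
  | zero => intro i; simp [Matrix.one_apply]
  | succ n ih =>
    intro i
    simp only [pow_succ', Matrix.mul_apply]
    rw [Finset.sum_comm]
    calc ∑ k, ∑ j, unsignedP A i k * (unsignedP A ^ n) k j
        = ∑ k, unsignedP A i k * ∑ j, (unsignedP A ^ n) k j := by
          simp [Finset.mul_sum]
      _ = 1 := by simp only [ih]; simpa using ab_unsignedP_row_sum A hd i

lemma ab_walk_pos (hd : ∀ i, 0 < sdeg A i) :
    ∀ (n : ℕ) (i j : V), DiWalk (fun i j => A i j ≠ 0) n i j → 0 < (unsignedP A ^ n) i j := by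
  intro n
  induction n with
  | zero =>
    intro i j h
    rw [show i = j from h]
    simp [Matrix.one_apply_eq]
  | succ n ih =>
    rintro i j ⟨k, hk, hw⟩
    rw [pow_succ', Matrix.mul_apply]
    have hterm : 0 < unsignedP A i k * (unsignedP A ^ n) k j :=
      mul_pos (div_pos (abs_pos.2 hk) (hd i)) (ih k j hw)
    exact Finset.sum_pos' (fun l _ => mul_nonneg (ab_unsignedP_nonneg A hd i l)
      (ab_unsignedP_pow_nonneg A hd n l j)) ⟨k, Finset.mem_univ k, hterm⟩

lemma ab_primitive [Nonempty V] (hsc : DiStronglyConnected (fun i j => A i j ≠ 0))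
    (hap : DiAperiodic (fun i j => A i j ≠ 0)) :
    ∃ m : ℕ, 1 ≤ m ∧ ∀ i j : V, 0 < (unsignedP A ^ m) i j := by
  set E := fun i j => A i j ≠ 0 with hE
  obtain ⟨v⟩ := (inferInstance : Nonempty V)
  have hL := key_semigroup' {n | DiWalk E n v v} rfl
    (fun a ha b hb => diwalk_trans' ha hb)
    (by
      intro d hd'
      apply hap d
      rintro n hn ⟨i, hw⟩
      obtain ⟨a, hav⟩ := hsc v i
      obtain ⟨b, hbv⟩ := hsc i v
      have d1 : d ∣ a + b := hd' _ (diwalk_trans' hav hbv)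
      have d2 : d ∣ a + (n + b) := hd' _ (diwalk_trans' hav (diwalk_trans' hw hbv))
      have heq : a + (n + b) = (a + b) + n := by ring
      rw [heq] at d2
      exact (Nat.dvd_add_right d1).mp d2)
  obtain ⟨N, hN⟩ := hL
  choose a ha using fun i => hsc i v
  choose b hb using fun j => hsc v j
  refine ⟨N + 1 + ∑ i, a i + ∑ j, b j, by omega, fun i j => ?_⟩
  set m := N + 1 + ∑ i, a i + ∑ j, b j with hm
  have hai : a i ≤ ∑ i, a i := Finset.single_le_sum (fun _ _ => Nat.zero_le _) (Finset.mem_univ i)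
  have hbj : b j ≤ ∑ j, b j := Finset.single_le_sum (fun _ _ => Nat.zero_le _) (Finset.mem_univ j)
  set ℓ := m - a i - b j with hℓ
  have hℓN : N ≤ ℓ := by omega
  have hw : DiWalk E (a i + (ℓ + b j)) i j :=
    diwalk_trans' (ha i) (diwalk_trans' (hN ℓ hℓN) (hb j))
  rw [show a i + (ℓ + b j) = m from by omega] at hw
  exact ab_walk_pos A (fun i => ab_sdeg_pos A hsc hap i) m i j hw

end

section
variable {V : Type*} [Fintype V] [DecidableEq V] [Nonempty V]

noncomputable def oscf (f : V → ℝ) : ℝ :=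
  Finset.univ.sup' Finset.univ_nonempty f - Finset.univ.inf' Finset.univ_nonempty f

omit [DecidableEq V] in
lemma oscf_nonneg (f : V → ℝ) : 0 ≤ oscf f := by
  obtain ⟨i⟩ := (inferInstance : Nonempty V)
  have h1 := Finset.inf'_le f (Finset.mem_univ i)
  have h2 := Finset.le_sup' f (Finset.mem_univ i)
  unfold oscf
  linarith

omit [DecidableEq V] in
lemma convex_comb_bounds (w f : V → ℝ) (hw0 : ∀ i, 0 ≤ w i) (hw1 : ∑ i, w i = 1) :
    Finset.univ.inf' Finset.univ_nonempty f ≤ ∑ i, w i * f i ∧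
    ∑ i, w i * f i ≤ Finset.univ.sup' Finset.univ_nonempty f := by
  constructor
  · calc Finset.univ.inf' Finset.univ_nonempty f
        = ∑ i, w i * Finset.univ.inf' Finset.univ_nonempty f := by
          rw [← Finset.sum_mul, hw1, one_mul]
      _ ≤ ∑ i, w i * f i := Finset.sum_le_sum fun i _ =>
          mul_le_mul_of_nonneg_left (Finset.inf'_le f (Finset.mem_univ i)) (hw0 i)
  · calc ∑ i, w i * f i
        ≤ ∑ i, w i * Finset.univ.sup' Finset.univ_nonempty f := Finset.sum_le_sum fun i _ =>
          mul_le_mul_of_nonneg_left (Finset.le_sup' f (Finset.mem_univ i)) (hw0 i)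
      _ = Finset.univ.sup' Finset.univ_nonempty f := by rw [← Finset.sum_mul, hw1, one_mul]

lemma row_upper (Q : Matrix V V ℝ) (hQ0 : ∀ i j, 0 ≤ Q i j)
    (hQ1 : ∀ i, ∑ j, Q i j = 1) (ε : ℝ) (hε : ∀ i j, ε ≤ Q i j) (f : V → ℝ) (i : V) :
    ∑ j, Q i j * f j ≤ Finset.univ.sup' Finset.univ_nonempty f - ε * oscf f := by
  obtain ⟨j₀, -, hj₀⟩ := Finset.exists_mem_eq_inf' (Finset.univ_nonempty) f
  set M := Finset.univ.sup' (Finset.univ_nonempty : (Finset.univ : Finset V).Nonempty) f with hM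
  set m := Finset.univ.inf' (Finset.univ_nonempty : (Finset.univ : Finset V).Nonempty) f with hm
  have hsplit : Q i j₀ * f j₀ + ∑ j ∈ Finset.univ.erase j₀, Q i j * f j = ∑ j, Q i j * f j :=
    Finset.add_sum_erase _ (fun j => Q i j * f j) (Finset.mem_univ j₀)
  have hsplit1 : Q i j₀ + ∑ j ∈ Finset.univ.erase j₀, Q i j = 1 := by
    rw [Finset.add_sum_erase _ (fun j => Q i j) (Finset.mem_univ j₀)]; exact hQ1 i
  have hbound : ∑ j ∈ Finset.univ.erase j₀, Q i j * f j
      ≤ (∑ j ∈ Finset.univ.erase j₀, Q i j) * M := by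
    rw [Finset.sum_mul]
    exact Finset.sum_le_sum fun j _ =>
      mul_le_mul_of_nonneg_left (Finset.le_sup' f (Finset.mem_univ j)) (hQ0 i j)
  have hfj₀ : f j₀ = m := hj₀.symm
  have hmM : m ≤ M := by
    have := oscf_nonneg f; unfold oscf at this; rw [← hM, ← hm] at this; linarith
  have hεQ : ε ≤ Q i j₀ := hε i j₀
  have hrest : ∑ j ∈ Finset.univ.erase j₀, Q i j = 1 - Q i j₀ := by linarith
  rw [hrest] at hbound
  have : ∑ j, Q i j * f j ≤ Q i j₀ * m + (1 - Q i j₀) * M := by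
    rw [← hsplit, hfj₀]
    linarith
  have hosc : oscf f = M - m := rfl
  have hh : ε * (M - m) ≤ Q i j₀ * (M - m) :=
    mul_le_mul_of_nonneg_right hεQ (by linarith)
  rw [hosc]
  linarith

lemma row_lower (Q : Matrix V V ℝ) (hQ0 : ∀ i j, 0 ≤ Q i j)
    (hQ1 : ∀ i, ∑ j, Q i j = 1) (ε : ℝ) (hε : ∀ i j, ε ≤ Q i j) (f : V → ℝ) (i : V) :
    Finset.univ.inf' Finset.univ_nonempty f + ε * oscf f ≤ ∑ j, Q i j * f j := by
  obtain ⟨j₀, -, hj₀⟩ := Finset.exists_mem_eq_sup' (Finset.univ_nonempty) f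
  set M := Finset.univ.sup' (Finset.univ_nonempty : (Finset.univ : Finset V).Nonempty) f with hM
  set m := Finset.univ.inf' (Finset.univ_nonempty : (Finset.univ : Finset V).Nonempty) f with hm
  have hsplit : Q i j₀ * f j₀ + ∑ j ∈ Finset.univ.erase j₀, Q i j * f j = ∑ j, Q i j * f j :=
    Finset.add_sum_erase _ (fun j => Q i j * f j) (Finset.mem_univ j₀)
  have hsplit1 : Q i j₀ + ∑ j ∈ Finset.univ.erase j₀, Q i j = 1 := by
    rw [Finset.add_sum_erase _ (fun j => Q i j) (Finset.mem_univ j₀)]; exact hQ1 i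
  have hbound : (∑ j ∈ Finset.univ.erase j₀, Q i j) * m
      ≤ ∑ j ∈ Finset.univ.erase j₀, Q i j * f j := by
    rw [Finset.sum_mul]
    exact Finset.sum_le_sum fun j _ =>
      mul_le_mul_of_nonneg_left (Finset.inf'_le f (Finset.mem_univ j)) (hQ0 i j)
  have hfj₀ : f j₀ = M := hj₀.symm
  have hmM : m ≤ M := by
    have := oscf_nonneg f; unfold oscf at this; rw [← hM, ← hm] at this; linarith
  have hεQ : ε ≤ Q i j₀ := hε i j₀
  have hrest : ∑ j ∈ Finset.univ.erase j₀, Q i j = 1 - Q i j₀ := by linarith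
  rw [hrest] at hbound
  have : Q i j₀ * M + (1 - Q i j₀) * m ≤ ∑ j, Q i j * f j := by
    rw [← hsplit, hfj₀]
    linarith
  have hosc : oscf f = M - m := rfl
  have hh : ε * (M - m) ≤ Q i j₀ * (M - m) :=
    mul_le_mul_of_nonneg_right hεQ (by linarith)
  rw [hosc]
  linarith

lemma osc_contract (Q : Matrix V V ℝ) (hQ0 : ∀ i j, 0 ≤ Q i j)
    (hQ1 : ∀ i, ∑ j, Q i j = 1) (ε : ℝ) (hε : ∀ i j, ε ≤ Q i j) (f : V → ℝ) :
    oscf (fun i => ∑ j, Q i j * f j) ≤ (1 - 2 * ε) * oscf f := by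
  have h1 : Finset.univ.sup' Finset.univ_nonempty (fun i => ∑ j, Q i j * f j)
      ≤ Finset.univ.sup' Finset.univ_nonempty f - ε * oscf f :=
    Finset.sup'_le _ _ fun i _ => row_upper Q hQ0 hQ1 ε hε f i
  have h2 : Finset.univ.inf' Finset.univ_nonempty f + ε * oscf f
      ≤ Finset.univ.inf' Finset.univ_nonempty (fun i => ∑ j, Q i j * f j) :=
    Finset.le_inf' _ _ fun i _ => row_lower Q hQ0 hQ1 ε hε f i
  unfold oscf at *
  linarith

end

end AntibalancedAux


section AntibalancedMain

variable {V : Type*} [Fintype V] [DecidableEq V]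

lemma ab_stationary_pow (A : Matrix V V ℝ) (hd : ∀ i, 0 < sdeg A i)
    (π : V → ℝ) (hπ : SStationary A π) :
    ∀ (t : ℕ) (j : V), ∑ i, π i * (unsignedP A ^ t) i j = π j := by
  intro t
  induction t with
  | zero =>
    intro j
    simp [Matrix.one_apply]
  | succ t ih =>
    intro j
    simp only [pow_succ, Matrix.mul_apply, Finset.mul_sum]
    rw [Finset.sum_comm]
    calc ∑ k, ∑ i, π i * ((unsignedP A ^ t) i k * unsignedP A k j)
        = ∑ k, (∑ i, π i * (unsignedP A ^ t) i k) * unsignedP A k j := by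
          congr 1; ext k; rw [Finset.sum_mul]; congr 1; ext i; ring
      _ = ∑ k, π k * unsignedP A k j := by simp only [ih]
      _ = π j := hπ.2.2 j

lemma ab_entry_tendsto [Nonempty V] (A : Matrix V V ℝ) (herg : SErgodic A)
    (π : V → ℝ) (hπ : SStationary A π) (i j : V) :
    Filter.Tendsto (fun t => (unsignedP A ^ t) i j) Filter.atTop (nhds (π j)) := by
  obtain ⟨hsc, hap⟩ := herg
  have hd : ∀ i, 0 < sdeg A i := ab_sdeg_pos A hsc hap
  obtain ⟨m, hm1, hmpos⟩ := ab_primitive A hsc hap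
  set Pb := unsignedP A with hPb
  -- the minimal entry of Pb ^ m
  set ε0 : ℝ := Finset.univ.inf' Finset.univ_nonempty
    (fun p : V × V => (Pb ^ m) p.1 p.2) with hε0
  have hε0pos : 0 < ε0 := by
    rw [hε0, Finset.lt_inf'_iff]
    exact fun p _ => hmpos p.1 p.2
  set ε : ℝ := min ε0 (1 / 2) with hε
  have hεpos : 0 < ε := lt_min hε0pos (by norm_num)
  have hεle : ∀ i j, ε ≤ (Pb ^ m) i j := fun i j =>
    le_trans (min_le_left _ _) (Finset.inf'_le _ (Finset.mem_univ (i, j)))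
  have hεhalf : ε ≤ 1 / 2 := min_le_right _ _
  set c : ℝ := 1 - 2 * ε with hc
  have hc0 : 0 ≤ c := by rw [hc]; linarith
  have hc1 : c < 1 := by rw [hc]; linarith
  -- oscillation of columns
  set oscc : ℕ → V → ℝ := fun t j => oscf (fun i => (Pb ^ t) i j) with hoscc
  have hstep1 : ∀ (t : ℕ) (j : V), oscc (t + 1) j ≤ oscc t j := by
    intro t j
    have h := osc_contract Pb (fun i k => ab_unsignedP_nonneg A hd i k)
      (fun i => ab_unsignedP_row_sum A hd i) 0
      (fun i k => ab_unsignedP_nonneg A hd i k) (fun l => (Pb ^ t) l j)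
    have heq : (fun i => ∑ l, Pb i l * (Pb ^ t) l j) = fun i => (Pb ^ (t + 1)) i j := by
      funext i
      rw [pow_succ', Matrix.mul_apply]
    rw [heq] at h
    simpa using h
  have hstepm : ∀ (t : ℕ) (j : V), oscc (m + t) j ≤ c * oscc t j := by
    intro t j
    have h := osc_contract (Pb ^ m) (fun i k => ab_unsignedP_pow_nonneg A hd m i k)
      (fun i => ab_unsignedP_pow_row_sum A hd m i) ε
      (fun i k => hεle i k) (fun l => (Pb ^ t) l j)
    have heq : (fun i => ∑ l, (Pb ^ m) i l * (Pb ^ t) l j) = fun i => (Pb ^ (m + t)) i j := by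
      funext i
      rw [pow_add, Matrix.mul_apply]
    rw [heq] at h
    exact h
  have hmono : ∀ (k t : ℕ) (j : V), oscc (t + k) j ≤ oscc t j := by
    intro k
    induction k with
    | zero => intro t j; exact le_refl _
    | succ k ih =>
      intro t j
      have : t + (k + 1) = (t + k) + 1 := by omega
      rw [this]
      exact le_trans (hstep1 (t + k) j) (ih t j)
  have hosc0 : ∀ j, oscc 0 j ≤ 1 := by
    intro j
    have h1 : Finset.univ.sup' Finset.univ_nonempty (fun i => ((Pb ^ 0) : Matrix V V ℝ) i j) ≤ 1 := by
      apply Finset.sup'_le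
      intro i _
      simp only [pow_zero]
      rcases eq_or_ne i j with rfl | h
      · simp [Matrix.one_apply_eq]
      · simp [Matrix.one_apply_ne h]
    have h2 : (0 : ℝ) ≤ Finset.univ.inf' Finset.univ_nonempty
        (fun i => ((Pb ^ 0) : Matrix V V ℝ) i j) := by
      apply Finset.le_inf'
      intro i _
      exact ab_unsignedP_pow_nonneg A hd 0 i j
    have : oscc 0 j = _ - _ := rfl
    simp only [hoscc]
    unfold oscf
    linarith
  have hbound : ∀ (t : ℕ) (j : V), oscc t j ≤ c ^ (t / m) := by
    intro t
    induction t using Nat.strong_induction_on with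
    | _ t ih =>
      intro j
      by_cases ht : t < m
      · rw [Nat.div_eq_of_lt ht, pow_zero]
        calc oscc t j = oscc (0 + t) j := by rw [Nat.zero_add]
          _ ≤ oscc 0 j := hmono t 0 j
          _ ≤ 1 := hosc0 j
      · push_neg at ht
        have htm : t = m + (t - m) := by omega
        have hlt : t - m < t := by omega
        calc oscc t j = oscc (m + (t - m)) j := by rw [← htm]
          _ ≤ c * oscc (t - m) j := hstepm (t - m) j
          _ ≤ c * c ^ ((t - m) / m) := mul_le_mul_of_nonneg_left (ih (t - m) hlt j) hc0
          _ = c ^ ((t - m) / m + 1) := by rw [pow_succ]; ring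
          _ = c ^ (t / m) := by
              congr 1
              rw [Nat.div_eq_sub_div (by omega : 0 < m) ht]
  have hsandwich : ∀ (t : ℕ), |(Pb ^ t) i j - π j| ≤ oscc t j := by
    intro t
    have hπt : ∑ l, π l * (Pb ^ t) l j = π j := ab_stationary_pow A hd π hπ t j
    obtain ⟨hlo, hhi⟩ := convex_comb_bounds π (fun l => (Pb ^ t) l j) hπ.1 hπ.2.1
    rw [hπt] at hlo hhi
    have h1 : Finset.univ.inf' Finset.univ_nonempty (fun l => (Pb ^ t) l j) ≤ (Pb ^ t) i j :=
      Finset.inf'_le (fun l => (Pb ^ t) l j) (Finset.mem_univ i)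
    have h2 : (Pb ^ t) i j ≤ Finset.univ.sup' Finset.univ_nonempty (fun l => (Pb ^ t) l j) :=
      Finset.le_sup' (fun l => (Pb ^ t) l j) (Finset.mem_univ i)
    have : oscc t j = _ - _ := rfl
    simp only [hoscc]
    unfold oscf
    rw [abs_le]
    constructor <;> linarith
  -- the geometric bound tends to 0
  have hdiv : Filter.Tendsto (fun t : ℕ => t / m) Filter.atTop Filter.atTop := by
    rw [Filter.tendsto_atTop_atTop]
    intro b
    exact ⟨b * m, fun t ht => (Nat.le_div_iff_mul_le (by omega)).2 ht⟩
  have hgeo : Filter.Tendsto (fun t : ℕ => c ^ (t / m)) Filter.atTop (nhds 0) :=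
    (tendsto_pow_atTop_nhds_zero_of_lt_one hc0 hc1).comp hdiv
  have hzero : Filter.Tendsto (fun t => (Pb ^ t) i j - π j) Filter.atTop (nhds 0) := by
    apply squeeze_zero_norm (fun t => ?_) hgeo
    rw [Real.norm_eq_abs]
    exact le_trans (hsandwich t) (hbound t j)
  have := hzero.add_const (π j)
  simpa using this

end AntibalancedMain

section SignIdentity

variable {V : Type*} [Fintype V] [DecidableEq V]

lemma ab_sign_entry (A : Matrix V V ℝ) (S : Finset V)
    (hanti : ∀ i j, A i j ≠ 0 → (A i j < 0 ↔ (i ∈ S ↔ j ∈ S))) (i j : V) :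
    signedP A i j = -((if i ∈ S then (1 : ℝ) else -1) * (if j ∈ S then (1 : ℝ) else -1))
      * unsignedP A i j := by
  by_cases h : A i j = 0
  · simp [signedP, unsignedP, h]
  · have hiff := hanti i j h
    unfold signedP unsignedP
    simp only [Matrix.of_apply]
    by_cases hi : i ∈ S <;> by_cases hj : j ∈ S <;> simp only [hi, hj, if_true, if_false]
    · have hneg : A i j < 0 := hiff.mpr ⟨fun _ => hj, fun _ => hi⟩
      rw [abs_of_neg hneg]; ring
    · have hpos : 0 < A i j := by
        rcases lt_trichotomy (A i j) 0 with hlt | heq | hgt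
        · exact absurd (hiff.mp hlt) (by simp [hi, hj])
        · exact absurd heq h
        · exact hgt
      rw [abs_of_pos hpos]; ring
    · have hpos : 0 < A i j := by
        rcases lt_trichotomy (A i j) 0 with hlt | heq | hgt
        · exact absurd (hiff.mp hlt) (by simp [hi, hj])
        · exact absurd heq h
        · exact hgt
      rw [abs_of_pos hpos]; ring
    · have hneg : A i j < 0 := hiff.mpr (iff_of_false hi hj)
      rw [abs_of_neg hneg]; ring

lemma ab_sign_pow (A : Matrix V V ℝ) (S : Finset V)
    (hanti : ∀ i j, A i j ≠ 0 → (A i j < 0 ↔ (i ∈ S ↔ j ∈ S))) :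
    ∀ (t : ℕ) (i j : V),
      (signedP A ^ t) i j = (-1 : ℝ) ^ t * ((if i ∈ S then (1 : ℝ) else -1)
        * (if j ∈ S then (1 : ℝ) else -1)) * (unsignedP A ^ t) i j := by
  intro t
  induction t with
  | zero =>
    intro i j
    rcases eq_or_ne i j with rfl | h
    · simp only [pow_zero, Matrix.one_apply_eq, one_mul]
      by_cases hi : i ∈ S <;> simp [hi]
    · simp [Matrix.one_apply_ne h]
  | succ t ih =>
    intro i j
    rw [pow_succ' (signedP A) t, pow_succ' (unsignedP A) t, Matrix.mul_apply, Matrix.mul_apply]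
    have hterm : ∀ k, signedP A i k * (signedP A ^ t) k j
        = (-1 : ℝ) ^ (t + 1) * ((if i ∈ S then (1 : ℝ) else -1)
          * (if j ∈ S then (1 : ℝ) else -1)) * (unsignedP A i k * (unsignedP A ^ t) k j) := by
      intro k
      rw [ab_sign_entry A S hanti i k, ih k j]
      have hk : (if k ∈ S then (1 : ℝ) else -1) * (if k ∈ S then (1 : ℝ) else -1) = 1 := by
        by_cases hk' : k ∈ S <;> simp [hk']
      calc -((if i ∈ S then (1:ℝ) else -1) * (if k ∈ S then (1:ℝ) else -1)) * unsignedP A i k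
            * ((-1:ℝ) ^ t * ((if k ∈ S then (1:ℝ) else -1) * (if j ∈ S then (1:ℝ) else -1))
              * (unsignedP A ^ t) k j)
          = ((if k ∈ S then (1:ℝ) else -1) * (if k ∈ S then (1:ℝ) else -1))
            * ((-1:ℝ) ^ (t + 1) * ((if i ∈ S then (1:ℝ) else -1) * (if j ∈ S then (1:ℝ) else -1))
              * (unsignedP A i k * (unsignedP A ^ t) k j)) := by ring
        _ = _ := by rw [hk]; ring
    rw [Finset.sum_congr rfl (fun k _ => hterm k), ← Finset.mul_sum]

end SignIdentity


/-- For an anti-balanced ergodic signed digraph with partition S, S̄,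
`P^{2t} → 1̂_S π̂_S^T` and `P^{2t+1} → -1̂_S π̂_S^T`. -/
theorem antibalanced_ergodic_powers_limit {V : Type*} [Fintype V] [DecidableEq V]
    (A : Matrix V V ℝ) (S : Finset V)
    (herg : SErgodic A)
    (hanti : ∀ i j, A i j ≠ 0 → (A i j < 0 ↔ (i ∈ S ↔ j ∈ S)))
    (π : V → ℝ) (hπ : SStationary A π) :
    Tendsto (fun t => signedP A ^ (2 * t)) atTop
      (nhds (Matrix.of fun i j =>
        (if i ∈ S then (1 : ℝ) else -1) * (if j ∈ S then π j else -π j))) ∧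
    Tendsto (fun t => signedP A ^ (2 * t + 1)) atTop
      (nhds (-(Matrix.of fun i j =>
        (if i ∈ S then (1 : ℝ) else -1) * (if j ∈ S then π j else -π j)))) := by
  have hne : Nonempty V := by
    by_contra h
    rw [not_nonempty_iff] at h
    have h1 := hπ.2.1
    rw [Finset.univ_eq_empty, Finset.sum_empty] at h1
    norm_num at h1
  have hconv : ∀ i j, Tendsto (fun t => (unsignedP A ^ t) i j) atTop (nhds (π j)) :=
    ab_entry_tendsto A herg π hπ
  have hsgn := ab_sign_pow A S hanti
  have h2t : Tendsto (fun t : ℕ => 2 * t) atTop atTop := by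
    rw [Filter.tendsto_atTop_atTop]
    intro b
    exact ⟨b, fun t ht => by omega⟩
  have h2t1 : Tendsto (fun t : ℕ => 2 * t + 1) atTop atTop := by
    rw [Filter.tendsto_atTop_atTop]
    intro b
    exact ⟨b, fun t ht => by omega⟩
  have hsj : ∀ j, (if j ∈ S then π j else -π j) = (if j ∈ S then (1 : ℝ) else -1) * π j := by
    intro j
    by_cases hj : j ∈ S <;> simp [hj]
  constructor
  · refine tendsto_pi_nhds.2 fun i => ?_
    rw [tendsto_pi_nhds]
    intro j
    have h1 : Tendsto (fun t => (unsignedP A ^ (2 * t)) i j) atTop (nhds (π j)) :=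
      (hconv i j).comp h2t
    have h2 : Tendsto (fun t => ((if i ∈ S then (1 : ℝ) else -1)
        * (if j ∈ S then (1 : ℝ) else -1)) * (unsignedP A ^ (2 * t)) i j) atTop
        (nhds (((if i ∈ S then (1 : ℝ) else -1) * (if j ∈ S then (1 : ℝ) else -1)) * π j)) :=
      h1.const_mul _
    have heq : (fun t => ((if i ∈ S then (1 : ℝ) else -1)
        * (if j ∈ S then (1 : ℝ) else -1)) * (unsignedP A ^ (2 * t)) i j)
        = fun t => (signedP A ^ (2 * t)) i j := by
      funext t
      rw [hsgn (2 * t) i j, (Even.neg_one_pow ⟨t, by ring⟩ : (-1 : ℝ) ^ (2 * t) = 1), one_mul]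
    rw [heq] at h2
    have htarget : (Matrix.of fun i j =>
        (if i ∈ S then (1 : ℝ) else -1) * (if j ∈ S then π j else -π j)) i j
        = ((if i ∈ S then (1 : ℝ) else -1) * (if j ∈ S then (1 : ℝ) else -1)) * π j := by
      rw [Matrix.of_apply, hsj j]
      ring
    rw [htarget]
    exact h2
  · refine tendsto_pi_nhds.2 fun i => ?_
    rw [tendsto_pi_nhds]
    intro j
    have h1 : Tendsto (fun t => (unsignedP A ^ (2 * t + 1)) i j) atTop (nhds (π j)) :=
      (hconv i j).comp h2t1
    have h2 : Tendsto (fun t => (-((if i ∈ S then (1 : ℝ) else -1)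
        * (if j ∈ S then (1 : ℝ) else -1))) * (unsignedP A ^ (2 * t + 1)) i j) atTop
        (nhds ((-((if i ∈ S then (1 : ℝ) else -1) * (if j ∈ S then (1 : ℝ) else -1))) * π j)) :=
      h1.const_mul _
    have heq : (fun t => (-((if i ∈ S then (1 : ℝ) else -1)
        * (if j ∈ S then (1 : ℝ) else -1))) * (unsignedP A ^ (2 * t + 1)) i j)
        = fun t => (signedP A ^ (2 * t + 1)) i j := by
      funext t
      rw [hsgn (2 * t + 1) i j,
        (Odd.neg_one_pow ⟨t, by ring⟩ : (-1 : ℝ) ^ (2 * t + 1) = -1)]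
      ring
    rw [heq] at h2
    have htarget : (-(Matrix.of fun i j =>
        (if i ∈ S then (1 : ℝ) else -1) * (if j ∈ S then π j else -π j))) i j
        = (-((if i ∈ S then (1 : ℝ) else -1) * (if j ∈ S then (1 : ℝ) else -1))) * π j := by
      rw [Matrix.neg_apply, Matrix.of_apply, hsj j]
      ring
    rw [htarget]
    exact h2
end

section
/- If G is an ergodic strictly unbalanced signed digraph with signed transition matrix P = D^{-1}A, then lim_{t→∞} P^t = 0. -/
open Matrix Filter Topology Finset

set_option linter.unusedSectionVars false
set_option linter.unusedVariables false
set_option maxHeartbeats 1000000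

namespace SU
variable {V : Type*} [Fintype V] [DecidableEq V]

noncomputable def Mw (A : Matrix V V ℝ) (n : ℕ) : Matrix V V ℝ :=
  (2⁻¹ : ℝ) • (unsignedP A ^ n + signedP A ^ n)
noncomputable def Nw (A : Matrix V V ℝ) (n : ℕ) : Matrix V V ℝ :=
  (2⁻¹ : ℝ) • (unsignedP A ^ n - signedP A ^ n)

open Classical in
noncomputable def wsgn (A : Matrix V V ℝ) (n : ℕ) (i j : V) : ℤ :=
  if 0 < Mw A n i j then 1 else if 0 < Nw A n i j then -1 else 0

variable (A : Matrix V V ℝ)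

lemma sdeg_nonneg (i : V) : 0 ≤ sdeg A i := Finset.sum_nonneg fun j _ => abs_nonneg _

lemma up_nonneg (i j : V) : 0 ≤ unsignedP A i j :=
  div_nonneg (abs_nonneg _) (sdeg_nonneg A i)

lemma abs_sp (i j : V) : |signedP A i j| = unsignedP A i j := by
  simp only [signedP, unsignedP, Matrix.of_apply, abs_div,
    abs_of_nonneg (sdeg_nonneg A i)]

lemma up_pow_nonneg (n : ℕ) (i j : V) : 0 ≤ (unsignedP A ^ n) i j := by
  induction n generalizing i j with
  | zero => simp [Matrix.one_apply]; positivity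
  | succ n ih =>
    rw [pow_succ, Matrix.mul_apply]
    exact Finset.sum_nonneg fun k _ => mul_nonneg (ih i k) (up_nonneg A k j)

lemma abs_sp_pow_le (n : ℕ) (i j : V) : |(signedP A ^ n) i j| ≤ (unsignedP A ^ n) i j := by
  induction n generalizing i j with
  | zero => rcases eq_or_ne i j with h|h <;> simp [Matrix.one_apply, h]
  | succ n ih =>
    rw [pow_succ, pow_succ, Matrix.mul_apply, Matrix.mul_apply]
    calc |∑ k, (signedP A ^ n) i k * signedP A k j|
        ≤ ∑ k, |(signedP A ^ n) i k * signedP A k j| := Finset.abs_sum_le_sum_abs _ _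
      _ ≤ ∑ k, (unsignedP A ^ n) i k * unsignedP A k j := by
          refine Finset.sum_le_sum fun k _ => ?_
          rw [abs_mul, abs_sp]
          exact mul_le_mul_of_nonneg_right (ih i k) (up_nonneg A k j)

lemma Mw_nonneg (n : ℕ) (i j : V) : 0 ≤ Mw A n i j := by
  have h2 := abs_le.1 (abs_sp_pow_le A n i j)
  simp only [Mw, Matrix.smul_apply, Matrix.add_apply, smul_eq_mul]
  nlinarith [h2.1]

lemma Nw_nonneg (n : ℕ) (i j : V) : 0 ≤ Nw A n i j := by
  have h2 := abs_le.1 (abs_sp_pow_le A n i j)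
  simp only [Nw, Matrix.smul_apply, Matrix.sub_apply, smul_eq_mul]
  nlinarith [h2.2]

lemma Mw_add_Nw (n : ℕ) : Mw A n + Nw A n = unsignedP A ^ n := by
  simp only [Mw, Nw]; module

lemma Mw_sub_Nw (n : ℕ) : Mw A n - Nw A n = signedP A ^ n := by
  simp only [Mw, Nw]; module

lemma MN_entry (n : ℕ) (i j : V) :
    (unsignedP A ^ n) i j = Mw A n i j + Nw A n i j := by
  rw [← Mw_add_Nw A n]; rfl

lemma Mw_comp (n m : ℕ) : Mw A (n + m) = Mw A n * Mw A m + Nw A n * Nw A m := by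
  simp only [Mw, Nw, pow_add, Matrix.smul_mul, Matrix.mul_smul, add_mul, mul_add,
    sub_mul, mul_sub, smul_add, smul_sub, smul_smul]
  module

lemma Nw_comp (n m : ℕ) : Nw A (n + m) = Mw A n * Nw A m + Nw A n * Mw A m := by
  simp only [Mw, Nw, pow_add, Matrix.smul_mul, Matrix.mul_smul, add_mul, mul_add,
    sub_mul, mul_sub, smul_add, smul_sub, smul_smul]
  module

lemma entry_mul_le {X Y : Matrix V V ℝ} (hX : ∀ i j, 0 ≤ X i j) (hY : ∀ i j, 0 ≤ Y i j)
    (i j k : V) : X i j * Y j k ≤ (X * Y) i k := by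
  rw [Matrix.mul_apply]
  exact Finset.single_le_sum (f := fun l => X i l * Y l k)
    (fun l _ => mul_nonneg (hX i l) (hY l k)) (Finset.mem_univ j)

lemma entry_mul_nonneg {X Y : Matrix V V ℝ} (hX : ∀ i j, 0 ≤ X i j) (hY : ∀ i j, 0 ≤ Y i j)
    (i k : V) : 0 ≤ (X * Y) i k := by
  rw [Matrix.mul_apply]
  exact Finset.sum_nonneg fun l _ => mul_nonneg (hX i l) (hY l k)

lemma posMM {n m : ℕ} {i j k : V} (h1 : 0 < Mw A n i j) (h2 : 0 < Mw A m j k) :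
    0 < Mw A (n + m) i k := by
  have := entry_mul_le (Mw_nonneg A n) (Mw_nonneg A m) i j k
  have h3 := entry_mul_nonneg (Nw_nonneg A n) (Nw_nonneg A m) i k
  rw [Mw_comp]
  have : 0 < (Mw A n * Mw A m) i k := lt_of_lt_of_le (mul_pos h1 h2) this
  simp only [Matrix.add_apply]
  linarith

lemma posNN {n m : ℕ} {i j k : V} (h1 : 0 < Nw A n i j) (h2 : 0 < Nw A m j k) :
    0 < Mw A (n + m) i k := by
  have := entry_mul_le (Nw_nonneg A n) (Nw_nonneg A m) i j k
  have h3 := entry_mul_nonneg (Mw_nonneg A n) (Mw_nonneg A m) i k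
  rw [Mw_comp]
  have : 0 < (Nw A n * Nw A m) i k := lt_of_lt_of_le (mul_pos h1 h2) this
  simp only [Matrix.add_apply]
  linarith

lemma posMN {n m : ℕ} {i j k : V} (h1 : 0 < Mw A n i j) (h2 : 0 < Nw A m j k) :
    0 < Nw A (n + m) i k := by
  have := entry_mul_le (Mw_nonneg A n) (Nw_nonneg A m) i j k
  have h3 := entry_mul_nonneg (Nw_nonneg A n) (Mw_nonneg A m) i k
  rw [Nw_comp]
  have : 0 < (Mw A n * Nw A m) i k := lt_of_lt_of_le (mul_pos h1 h2) this
  simp only [Matrix.add_apply]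
  linarith

lemma posNM {n m : ℕ} {i j k : V} (h1 : 0 < Nw A n i j) (h2 : 0 < Mw A m j k) :
    0 < Nw A (n + m) i k := by
  have := entry_mul_le (Nw_nonneg A n) (Mw_nonneg A m) i j k
  have h3 := entry_mul_nonneg (Mw_nonneg A n) (Nw_nonneg A m) i k
  rw [Nw_comp]
  have : 0 < (Nw A n * Mw A m) i k := lt_of_lt_of_le (mul_pos h1 h2) this
  simp only [Matrix.add_apply]
  linarith

/-- `hasW A n i j` : there is a walk of length n from i to j (positively weighted). -/
def hasW (n : ℕ) (i j : V) : Prop := 0 < (unsignedP A ^ n) i j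

lemma hasW_iff (n : ℕ) (i j : V) :
    hasW A n i j ↔ 0 < Mw A n i j ∨ 0 < Nw A n i j := by
  unfold hasW
  rw [MN_entry]
  constructor
  · intro h
    rcases lt_or_ge 0 (Mw A n i j) with h1 | h1
    · exact Or.inl h1
    · right; have := Mw_nonneg A n i j; linarith
  · intro h
    have := Mw_nonneg A n i j
    have := Nw_nonneg A n i j
    rcases h with h | h <;> linarith

lemma hasW_comp {n m : ℕ} {i j k : V} (h1 : hasW A n i j) (h2 : hasW A m j k) :
    hasW A (n + m) i k := by
  unfold hasW at *
  rw [pow_add]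
  exact lt_of_lt_of_le (mul_pos h1 h2)
    (entry_mul_le (up_pow_nonneg A n) (up_pow_nonneg A m) i j k)

lemma sdeg_pos_of_edge {i k : V} (h : A i k ≠ 0) : 0 < sdeg A i :=
  lt_of_lt_of_le (abs_pos.2 h)
    (Finset.single_le_sum (f := fun j => |A i j|) (fun j _ => abs_nonneg _) (Finset.mem_univ k))

lemma hasW_one_of_edge {i k : V} (h : A i k ≠ 0) : hasW A 1 i k := by
  unfold hasW
  rw [pow_one]
  exact div_pos (abs_pos.2 h) (sdeg_pos_of_edge A h)

lemma walk_hasW {n : ℕ} {i j : V} (h : DiWalk (fun a b => A a b ≠ 0) n i j) :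
    hasW A n i j := by
  induction n generalizing i with
  | zero => cases h; unfold hasW; simp [Matrix.one_apply]
  | succ n ih =>
    obtain ⟨k, hik, hw⟩ := h
    have : (1 : ℕ) + n = n + 1 := by omega
    rw [show n + 1 = 1 + n by omega]
    exact hasW_comp A (hasW_one_of_edge A hik) (ih hw)

lemma up_rowsum (hd : ∀ i, 0 < sdeg A i) (i : V) : ∑ j, unsignedP A i j = 1 := by
  simp only [unsignedP, Matrix.of_apply, ← Finset.sum_div]
  rw [div_eq_one_iff_eq (ne_of_gt (hd i))]; rfl

lemma up_pow_rowsum (hd : ∀ i, 0 < sdeg A i) (n : ℕ) (i : V) :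
    ∑ j, (unsignedP A ^ n) i j = 1 := by
  induction n generalizing i with
  | zero => simp [Matrix.one_apply]
  | succ n ih =>
    rw [pow_succ']
    simp only [Matrix.mul_apply]
    rw [Finset.sum_comm]
    calc ∑ k, ∑ j, unsignedP A i k * (unsignedP A ^ n) k j
        = ∑ k, unsignedP A i k * ∑ j, (unsignedP A ^ n) k j := by
          simp [Finset.mul_sum]
      _ = 1 := by simp only [ih]; simpa using up_rowsum A hd i

lemma wsgn_pos {n : ℕ} {i j : V} (h : 0 < Mw A n i j) : wsgn A n i j = 1 := by
  unfold wsgn; rw [if_pos h]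

lemma wsgn_pm {n : ℕ} {i j : V} (h : hasW A n i j) :
    wsgn A n i j = 1 ∨ wsgn A n i j = -1 := by
  rcases (hasW_iff A n i j).1 h with h1 | h1
  · left; exact wsgn_pos A h1
  · by_cases hM : 0 < Mw A n i j
    · left; exact wsgn_pos A hM
    · right; unfold wsgn; rw [if_neg hM, if_pos h1]

lemma wsgn_neg {n : ℕ} {i j : V}
    (hcon : ∀ (t : ℕ) (a b : V), ¬(0 < Mw A t a b ∧ 0 < Nw A t a b))
    (h : 0 < Nw A n i j) : wsgn A n i j = -1 := by
  unfold wsgn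
  rw [if_neg (fun hM => hcon n i j ⟨hM, h⟩), if_pos h]

lemma wsgn_mul (hcon : ∀ (t : ℕ) (a b : V), ¬(0 < Mw A t a b ∧ 0 < Nw A t a b))
    {n m : ℕ} {i j k : V} (h1 : hasW A n i j) (h2 : hasW A m j k) :
    wsgn A (n + m) i k = wsgn A n i j * wsgn A m j k := by
  rcases (hasW_iff A n i j).1 h1 with hM1 | hN1 <;>
    rcases (hasW_iff A m j k).1 h2 with hM2 | hN2
  · rw [wsgn_pos A hM1, wsgn_pos A hM2, wsgn_pos A (posMM A hM1 hM2)]; ring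
  · rw [wsgn_pos A hM1, wsgn_neg A hcon hN2, wsgn_neg A hcon (posMN A hM1 hN2)]; ring
  · rw [wsgn_neg A hcon hN1, wsgn_pos A hM2, wsgn_neg A hcon (posNM A hN1 hM2)]; ring
  · rw [wsgn_neg A hcon hN1, wsgn_neg A hcon hN2, wsgn_pos A (posNN A hN1 hN2)]; ring

lemma wsgn_edge_pos {i j : V} (hij : A i j ≠ 0) :
    0 < A i j ↔ wsgn A 1 i j = 1 := by
  have hd : 0 < sdeg A i := sdeg_pos_of_edge A hij
  have hM : Mw A 1 i j = (|A i j| + A i j) / (2 * sdeg A i) := by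
    simp only [Mw, pow_one, Matrix.smul_apply, Matrix.add_apply, smul_eq_mul,
      unsignedP, signedP, Matrix.of_apply]
    field_simp
  have hN : Nw A 1 i j = (|A i j| - A i j) / (2 * sdeg A i) := by
    simp only [Nw, pow_one, Matrix.smul_apply, Matrix.sub_apply, smul_eq_mul,
      unsignedP, signedP, Matrix.of_apply]
    field_simp
  constructor
  · intro h
    apply wsgn_pos
    rw [hM]
    have : 0 < |A i j| + A i j := by rw [abs_of_pos h]; linarith
    positivity
  · intro h
    by_contra hno
    have hlt : A i j < 0 := by
      rcases lt_trichotomy (A i j) 0 with h1 | h1 | h1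
      · exact h1
      · exact absurd h1 hij
      · exact absurd h1 hno
    have hNpos : 0 < Nw A 1 i j := by
      rw [hN]
      have : 0 < |A i j| - A i j := by rw [abs_of_neg hlt]; linarith
      positivity
    have hMz : ¬ 0 < Mw A 1 i j := by
      rw [hM]
      have : |A i j| + A i j = 0 := by rw [abs_of_neg hlt]; ring
      rw [this]
      simp
    unfold wsgn at h
    rw [if_neg hMz, if_pos hNpos] at h
    exact absurd h (by norm_num)

lemma wsgn_edge_neg {i j : V} (hij : A i j ≠ 0) :
    A i j < 0 ↔ wsgn A 1 i j = -1 := by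
  have h1 := wsgn_edge_pos A hij
  have h2 := wsgn_pm A (hasW_one_of_edge A hij)
  constructor
  · intro h
    rcases h2 with h' | h'
    · have := h1.2 h'
      linarith
    · exact h'
  · intro h
    rcases lt_trichotomy (A i j) 0 with h' | h' | h'
    · exact h'
    · exact absurd h' hij
    · rw [h1.1 h'] at h
      norm_num at h

lemma bezout_finset (s : Finset ℕ) : ∃ f : ℕ → ℤ, ((s.gcd id : ℕ) : ℤ) = ∑ i ∈ s, f i * i := by
  classical
  induction s using Finset.induction with
  | empty => exact ⟨fun _ => 0, by simp⟩
  | @insert a s ha ih =>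
    obtain ⟨f, hf⟩ := ih
    rw [Finset.gcd_insert]
    set g : ℕ := s.gcd id with hg
    refine ⟨fun i => if i = a then Nat.gcdA a g else Nat.gcdB a g * f i, ?_⟩
    rw [Finset.sum_insert ha]
    dsimp only
    rw [if_pos rfl]
    have hb := Nat.gcd_eq_gcd_ab a g
    have : ∑ i ∈ s, (if i = a then Nat.gcdA a g else Nat.gcdB a g * f i) * (i:ℤ)
        = Nat.gcdB a g * ∑ i ∈ s, f i * i := by
      rw [Finset.mul_sum]
      refine Finset.sum_congr rfl fun i hi => ?_
      rw [if_neg (by rintro rfl; exact ha hi)]; ring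
    rw [this, ← hf]
    have hgg : ((GCDMonoid.gcd (id a) g : ℕ) : ℤ) = ((Nat.gcd a g : ℕ) : ℤ) := rfl
    rw [hgg, hb]
    ring

lemma P_mul {P : ℕ → Prop} (hadd : ∀ a b, P a → P b → P (a + b)) {m : ℕ} (hm : P m) :
    ∀ k, 0 < k → P (k * m) := by
  intro k hk
  induction k with
  | zero => omega
  | succ k ih =>
    rcases Nat.eq_zero_or_pos k with rfl | hk'
    · simpa using hm
    · have := hadd _ _ (ih hk') hm
      simpa [Nat.succ_mul] using this

lemma P_sum {P : ℕ → Prop} (hadd : ∀ a b, P a → P b → P (a + b)) :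
    ∀ s : Finset ℕ, (∀ i ∈ s, P i) → ∀ w : ℕ → ℕ,
      0 < ∑ i ∈ s, w i * i → P (∑ i ∈ s, w i * i) := by
  classical
  intro s
  induction s using Finset.induction with
  | empty => intro _ w h; simp at h
  | @insert a s ha ih =>
    intro hP w hpos
    rw [Finset.sum_insert ha] at hpos ⊢
    rcases Nat.eq_zero_or_pos (w a * a) with h0 | hpa
    · rw [h0, zero_add] at hpos ⊢
      exact ih (fun i hi => hP i (Finset.mem_insert_of_mem hi)) w hpos
    · have hwa : 0 < w a := by
        rcases Nat.eq_zero_or_pos (w a) with h | h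
        · rw [h] at hpa; simp at hpa
        · exact h
      have hPa : P (w a * a) := P_mul hadd (hP a (Finset.mem_insert_self a s)) (w a) hwa
      rcases Nat.eq_zero_or_pos (∑ i ∈ s, w i * i) with h1 | h1
      · rw [h1, add_zero]; exact hPa
      · exact hadd _ _ hPa (ih (fun i hi => hP i (Finset.mem_insert_of_mem hi)) w h1)

lemma nt_cofinite (P : ℕ → Prop) (hpos : ∀ n, P n → 0 < n)
    (hadd : ∀ a b, P a → P b → P (a + b)) (hex : ∃ a, P a)
    (hgcd : ∀ d : ℕ, (∀ n, P n → d ∣ n) → d = 1) :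
    ∃ B, ∀ n, B ≤ n → P n := by
  classical
  obtain ⟨a0, ha0⟩ := hex
  -- the set of gcds of finite subsets of P
  set Gs : Set ℕ := {g | 0 < g ∧ ∃ s : Finset ℕ, (∀ x ∈ s, P x) ∧ s.gcd id = g} with hGs
  have hne : a0 ∈ Gs := by
    refine ⟨hpos _ ha0, {a0}, by simpa using ha0, by simp⟩
  set g := sInf Gs with hg
  have hgmem : g ∈ Gs := Nat.sInf_mem ⟨a0, hne⟩
  obtain ⟨hg0, s, hsP, hsg⟩ := hgmem
  have hdvd : ∀ n, P n → g ∣ n := by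
    intro n hn
    by_contra hnd
    have hmem : Nat.gcd n g ∈ Gs := by
      refine ⟨Nat.gcd_pos_of_pos_right n hg0, insert n s, ?_, ?_⟩
      · intro x hx; rcases Finset.mem_insert.1 hx with rfl | hx
        · exact hn
        · exact hsP x hx
      · rw [Finset.gcd_insert, hsg]; rfl
    have hle : g ≤ Nat.gcd n g := Nat.sInf_le hmem
    have hlt : Nat.gcd n g < g := by
      have h1 : Nat.gcd n g ∣ g := Nat.gcd_dvd_right n g
      have h2 : Nat.gcd n g ≠ g := by
        intro h; exact hnd (h ▸ Nat.gcd_dvd_left n g)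
      exact lt_of_le_of_ne (Nat.le_of_dvd hg0 h1) h2
    omega
  have hg1 : g = 1 := hgcd g hdvd
  rw [hg1] at hsg
  have hsne : s.Nonempty := by
    rcases Finset.eq_empty_or_nonempty s with rfl | h
    · simp at hsg
    · exact h
  obtain ⟨a, has⟩ := hsne
  have hapos : 0 < a := hpos a (hsP a has)
  obtain ⟨f, hf⟩ := bezout_finset s
  rw [hsg] at hf
  set K : ℕ := ∑ i ∈ s, (f i).natAbs * i with hK
  refine ⟨a * (K + 1), fun n hn => ?_⟩
  set q := n / a with hq
  set r := n % a with hr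
  have hqr : n = a * q + r := (Nat.div_add_mod n a).symm ▸ by omega
  have hra : r < a := Nat.mod_lt n hapos
  have hqK : K ≤ q := by
    have : a * (K + 1) ≤ a * q + r := by omega
    nlinarith
  -- integer coefficients
  set wI : ℕ → ℤ := fun i =>
    ((r : ℤ) * f i + (f i).natAbs * a) + (if i = a then (q : ℤ) - K else 0) with hwI
  have hwInn : ∀ i ∈ s, 0 ≤ wI i := by
    intro i hi
    have h1 : 0 ≤ (r : ℤ) * f i + (f i).natAbs * a := by
      have hna : -((f i).natAbs : ℤ) ≤ f i := by
        rw [← Int.abs_eq_natAbs]; exact neg_abs_le (f i)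
      have hr0 : (0:ℤ) ≤ r := Int.ofNat_nonneg r
      have hrla : (r:ℤ) ≤ a := by exact_mod_cast hra.le
      nlinarith [Int.ofNat_nonneg ((f i).natAbs)]
    have h2 : (0:ℤ) ≤ if i = a then (q : ℤ) - K else 0 := by
      split
      · have : (K:ℤ) ≤ q := by exact_mod_cast hqK
        omega
      · omega
    simp only [hwI]
    exact add_nonneg h1 h2
  have hf1 : (∑ i ∈ s, f i * i : ℤ) = 1 := by
    rw [← hf]; norm_num
  have hKz : (K:ℤ) = ∑ i ∈ s, ((f i).natAbs : ℤ) * (i:ℤ) := by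
    rw [hK]; push_cast; ring
  have hsum : ∑ i ∈ s, wI i * (i:ℤ) = (n:ℤ) := by
    have e0 : ∑ i ∈ s, wI i * (i:ℤ)
        = (∑ i ∈ s, (r:ℤ) * (f i * i)) + (∑ i ∈ s, ((f i).natAbs:ℤ) * (i:ℤ) * a)
          + ∑ i ∈ s, (if i = a then ((q:ℤ) - K) * i else 0) := by
      rw [← Finset.sum_add_distrib, ← Finset.sum_add_distrib]
      refine Finset.sum_congr rfl fun i hi => ?_
      simp only [hwI]
      split <;> ring
    rw [e0, ← Finset.mul_sum, hf1, ← Finset.sum_mul, ← hKz,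
      Finset.sum_ite_eq' s a (fun i => ((q:ℤ) - K) * i), if_pos has]
    have : (n:ℤ) = a * q + r := by exact_mod_cast congrArg (Nat.cast : ℕ → ℤ) hqr
    rw [this]; push_cast; ring
  set w : ℕ → ℕ := fun i => (wI i).natAbs with hw
  have hcast : ∀ i ∈ s, ((w i : ℕ) : ℤ) = wI i := by
    intro i hi
    simp only [hw]
    exact Int.natAbs_of_nonneg (hwInn i hi)
  have hsumN : ∑ i ∈ s, w i * i = n := by
    have : ((∑ i ∈ s, w i * i : ℕ) : ℤ) = (n:ℤ) := by
      push_cast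
      rw [Finset.sum_congr rfl fun i hi => by rw [hcast i hi]]
      exact hsum
    exact_mod_cast this
  have hnpos : 0 < ∑ i ∈ s, w i * i := by
    rw [hsumN]
    have : 0 < a * (K + 1) := by positivity
    omega
  have := P_sum hadd s hsP w hnpos
  rwa [hsumN] at this


lemma balanced_of_no_cancel (herg : SErgodic A) (hedge : ∃ x y, A x y ≠ 0)
    (hcon : ∀ (t : ℕ) (a b : V), ¬(0 < Mw A t a b ∧ 0 < Nw A t a b)) :
    SBalancedM A ∨ SAntiBalancedM A := by
  classical
  obtain ⟨x, y, hxy⟩ := hedge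
  have hwalk : ∀ i j : V, ∃ n, hasW A n i j := by
    intro i j
    obtain ⟨n, hn⟩ := herg.1 i j
    exact ⟨n, walk_hasW A hn⟩
  set v : V := x with hv
  -- closed walks at every node
  have hclosed : ∀ u : V, ∃ n, 0 < n ∧ hasW A n u u := by
    intro u
    obtain ⟨n1, h1⟩ := hwalk u x
    obtain ⟨n2, h2⟩ := hwalk y u
    exact ⟨n1 + 1 + n2, by omega,
      hasW_comp A (hasW_comp A h1 (hasW_one_of_edge A hxy)) h2⟩
  -- all large lengths admit closed walks at v
  obtain ⟨B, hB⟩ : ∃ B, ∀ n, B ≤ n → (0 < n ∧ hasW A n v v) := by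
    apply nt_cofinite (fun n => 0 < n ∧ hasW A n v v)
    · exact fun n h => h.1
    · rintro a b ⟨ha, ha'⟩ ⟨hb, hb'⟩
      exact ⟨by omega, hasW_comp A ha' hb'⟩
    · exact hclosed v
    · intro d hd
      apply herg.2 d
      rintro n hn ⟨i, hi⟩
      have hii : hasW A n i i := walk_hasW A hi
      obtain ⟨p, hp⟩ := hwalk v i
      obtain ⟨q, hq⟩ := hwalk i v
      rcases Nat.eq_zero_or_pos (p + q) with h0 | h0
      · have hp0 : p = 0 := by omega
        have hq0 : q = 0 := by omega
        -- v→i of length 0 forces walk composition directly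
        have : hasW A (p + (n + q)) v v := hasW_comp A hp (hasW_comp A hii hq)
        rw [hp0, hq0] at this
        simp only [Nat.zero_add, Nat.add_zero] at this
        exact hd n ⟨hn, this⟩
      · have h1 : hasW A (p + (n + q)) v v := hasW_comp A hp (hasW_comp A hii hq)
        have h2 : hasW A (p + q) v v := hasW_comp A hp hq
        have d1 := hd (p + (n + q)) ⟨by omega, h1⟩
        have d2 := hd (p + q) ⟨h0, h2⟩
        have : p + (n + q) = n + (p + q) := by omega
        rw [this] at d1
        exact (Nat.dvd_add_right d2).1 (by rwa [Nat.add_comm] at d1)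
  -- even closed walks are positive
  have heven2 : ∀ n, B ≤ n → wsgn A (2 * n) v v = 1 := by
    intro n hn
    have h2 : hasW A (2 * n) v v := (hB (2 * n) (by omega)).2
    have h3 : hasW A (3 * n) v v := (hB (3 * n) (by omega)).2
    have e1 : wsgn A (3 * n + 3 * n) v v = wsgn A (3 * n) v v * wsgn A (3 * n) v v :=
      wsgn_mul A hcon h3 h3
    have e2 : wsgn A (2 * n + (2 * n + 2 * n)) v v
        = wsgn A (2 * n) v v * (wsgn A (2 * n) v v * wsgn A (2 * n) v v) := by
      rw [wsgn_mul A hcon h2 (hasW_comp A h2 h2), wsgn_mul A hcon h2 h2]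
    have hee : 3 * n + 3 * n = 2 * n + (2 * n + 2 * n) := by omega
    rw [hee] at e1
    rcases wsgn_pm A h2 with h | h <;> rcases wsgn_pm A h3 with h' | h' <;>
      simp [h, h'] at * <;> omega
  have heven : ∀ m, hasW A m v v → Even m → wsgn A m v v = 1 := by
    intro m hm hev
    obtain ⟨m', rfl⟩ := hev
    set n := B + m' with hn
    have h2n : wsgn A (2 * n) v v = 1 := heven2 n (by omega)
    have h2nm : wsgn A (2 * (n + m')) v v = 1 := heven2 (n + m') (by omega)
    have hcomp : wsgn A (2 * n + (m' + m')) v v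
        = wsgn A (2 * n) v v * wsgn A (m' + m') v v :=
      wsgn_mul A hcon (hB (2 * n) (by omega)).2 hm
    have : 2 * n + (m' + m') = 2 * (n + m') := by omega
    rw [this, h2nm, h2n] at hcomp
    omega
  -- the parity character c
  set o := 2 * B + 1 with ho
  have hoW : hasW A o v v := (hB o (by omega)).2
  set c := wsgn A o v v with hc
  have hcpm : c = 1 ∨ c = -1 := wsgn_pm A hoW
  have hodd : ∀ m, hasW A m v v → ¬ Even m → wsgn A m v v = c := by
    intro m hm hev
    have hsum : wsgn A (m + o) v v = wsgn A m v v * c := wsgn_mul A hcon hm hoW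
    have hevmo : Even (m + o) := by
      rcases Nat.even_or_odd m with h | h
      · exact absurd h hev
      · have : Odd o := by exact ⟨B, by omega⟩
        exact Odd.add_odd h this
    have h1 : wsgn A (m + o) v v = 1 := heven _ (hasW_comp A hm hoW) hevmo
    rcases wsgn_pm A hm with h | h <;> rcases hcpm with h' | h' <;>
      simp [h, h'] at * <;> omega
  -- choose return walks and define node signs
  choose ret hret using fun i => hwalk i v
  set εz : V → ℤ := fun i => wsgn A (ret i) i v * (if Even (ret i) then 1 else c)
    with hεz
  have hεpm : ∀ i, εz i = 1 ∨ εz i = -1 := by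
    intro i
    rcases wsgn_pm A (hret i) with h | h <;> rcases hcpm with h' | h' <;>
      simp only [hεz, h] <;> split <;> simp [h']
  have hεdef : ∀ i n, hasW A n v i →
      wsgn A n v i * (if Even n then 1 else c) = εz i := by
    intro i n hn
    have hsum : wsgn A (n + ret i) v v = wsgn A n v i * wsgn A (ret i) i v :=
      wsgn_mul A hcon hn (hret i)
    have hchar : wsgn A (n + ret i) v v = (if Even (n + ret i) then 1 else c) := by
      rcases Nat.even_or_odd (n + ret i) with h | h
      · rw [if_pos h]; exact heven _ (hasW_comp A hn (hret i)) h
      · rw [if_neg (Nat.not_even_iff_odd.2 h)]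
        exact hodd _ (hasW_comp A hn (hret i)) (Nat.not_even_iff_odd.2 h)
    simp only [hεz]
    rcases Nat.even_or_odd n with hpn | hpn <;>
      rcases Nat.even_or_odd (ret i) with hpr | hpr
    · have hev : Even (n + ret i) := Even.add hpn hpr
      rw [if_pos hev] at hchar
      rw [if_pos hpn, if_pos hpr]
      rcases wsgn_pm A hn with h | h <;> rcases wsgn_pm A (hret i) with h' | h' <;>
        simp [h, h'] at hsum hchar ⊢ <;> omega
    · have hev : ¬ Even (n + ret i) := by
        simp [Nat.even_add, hpn, Nat.not_even_iff_odd.2 hpr]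
      rw [if_neg hev] at hchar
      rw [if_pos hpn, if_neg (Nat.not_even_iff_odd.2 hpr)]
      rcases wsgn_pm A hn with h | h <;> rcases wsgn_pm A (hret i) with h' | h' <;>
        rcases hcpm with h'' | h'' <;> simp [h, h', h''] at hsum hchar ⊢ <;> omega
    · have hev : ¬ Even (n + ret i) := by
        simp [Nat.even_add, hpr, Nat.not_even_iff_odd.2 hpn]
      rw [if_neg hev] at hchar
      rw [if_neg (Nat.not_even_iff_odd.2 hpn), if_pos hpr]
      rcases wsgn_pm A hn with h | h <;> rcases wsgn_pm A (hret i) with h' | h' <;>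
        rcases hcpm with h'' | h'' <;> simp [h, h', h''] at hsum hchar ⊢ <;> omega
    · have hev : Even (n + ret i) := Odd.add_odd hpn hpr
      rw [if_pos hev] at hchar
      rw [if_neg (Nat.not_even_iff_odd.2 hpn), if_neg (Nat.not_even_iff_odd.2 hpr)]
      rcases wsgn_pm A hn with h | h <;> rcases wsgn_pm A (hret i) with h' | h' <;>
        rcases hcpm with h'' | h'' <;> simp [h, h', h''] at hsum hchar ⊢ <;> omega
  -- edge sign rule
  have hedgeRule : ∀ i j : V, A i j ≠ 0 → wsgn A 1 i j = c * εz i * εz j := by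
    intro i j hij
    obtain ⟨n, hn⟩ := hwalk v i
    have h1 : hasW A 1 i j := hasW_one_of_edge A hij
    have hsum : wsgn A (n + 1) v j = wsgn A n v i * wsgn A 1 i j :=
      wsgn_mul A hcon hn h1
    have hεi := hεdef i n hn
    have hεj := hεdef j (n + 1) (hasW_comp A hn h1)
    rw [hsum] at hεj
    rcases Nat.even_or_odd n with hpn | hpn
    · rw [if_pos hpn] at hεi
      have hne : ¬ Even (n + 1) := by simp [Nat.even_add_one, hpn]
      rw [if_neg hne] at hεj
      rcases wsgn_pm A hn with h | h <;> rcases wsgn_pm A h1 with h' | h' <;>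
        rcases hcpm with h'' | h'' <;> simp [h, h', h''] at hεi hεj ⊢ <;>
        rw [← hεi, ← hεj] <;> ring_nf <;> omega
    · rw [if_neg (Nat.not_even_iff_odd.2 hpn)] at hεi
      have hne : Even (n + 1) := Odd.add_one hpn
      rw [if_pos hne] at hεj
      rcases wsgn_pm A hn with h | h <;> rcases wsgn_pm A h1 with h' | h' <;>
        rcases hcpm with h'' | h'' <;> simp [h, h', h''] at hεi hεj ⊢ <;>
        rw [← hεi, ← hεj] <;> ring_nf <;> omega
  -- conclude balance or antibalance
  rcases hcpm with hc1 | hc1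
  · left
    refine ⟨{i | εz i = 1}, fun i j hij => ?_⟩
    rw [Set.mem_setOf_eq, Set.mem_setOf_eq, wsgn_edge_pos A hij]
    have hrule := hedgeRule i j hij
    rw [hc1] at hrule
    rcases hεpm i with h1 | h1 <;> rcases hεpm j with h2 | h2 <;>
      rw [h1, h2] at hrule <;> norm_num at hrule <;> simp [hrule, h1, h2]
  · right
    refine ⟨{i | εz i = 1}, fun i j hij => ?_⟩
    rw [Set.mem_setOf_eq, Set.mem_setOf_eq, wsgn_edge_neg A hij]
    have hrule := hedgeRule i j hij
    rw [hc1] at hrule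
    rcases hεpm i with h1 | h1 <;> rcases hεpm j with h2 | h2 <;>
      rw [h1, h2] at hrule <;> norm_num at hrule <;> simp [hrule, h1, h2]


lemma diwalk_append {E : V → V → Prop} :
    ∀ {n m : ℕ} {i j k : V}, DiWalk E n i j → DiWalk E m j k → DiWalk E (n + m) i k := by
  intro n
  induction n with
  | zero => intro m i j k h1 h2; cases h1; rwa [Nat.zero_add]
  | succ n ih =>
    intro m i j k h1 h2
    obtain ⟨l, hl, hw⟩ := h1
    rw [show n + 1 + m = (n + m) + 1 from by omega]
    exact ⟨l, hl, ih hw h2⟩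

lemma closed_cofinite (herg : SErgodic A) (hedge : ∃ x y, A x y ≠ 0) (u : V) :
    ∃ B, ∀ n, B ≤ n → (0 < n ∧ hasW A n u u) := by
  obtain ⟨x, y, hxy⟩ := hedge
  have hwalk : ∀ i j : V, ∃ n, hasW A n i j := by
    intro i j
    obtain ⟨n, hn⟩ := herg.1 i j
    exact ⟨n, walk_hasW A hn⟩
  apply nt_cofinite (fun n => 0 < n ∧ hasW A n u u)
  · exact fun n h => h.1
  · rintro a b ⟨ha, ha'⟩ ⟨hb, hb'⟩
    exact ⟨by omega, hasW_comp A ha' hb'⟩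
  · obtain ⟨n1, h1⟩ := hwalk u x
    obtain ⟨n2, h2⟩ := hwalk y u
    exact ⟨n1 + 1 + n2, by omega,
      hasW_comp A (hasW_comp A h1 (hasW_one_of_edge A hxy)) h2⟩
  · intro d hd
    apply herg.2 d
    rintro n hn ⟨i, hi⟩
    have hii : hasW A n i i := walk_hasW A hi
    obtain ⟨p, hp⟩ := hwalk u i
    obtain ⟨q, hq⟩ := hwalk i u
    rcases Nat.eq_zero_or_pos (p + q) with h0 | h0
    · have hp0 : p = 0 := by omega
      have hq0 : q = 0 := by omega
      have : hasW A (p + (n + q)) u u := hasW_comp A hp (hasW_comp A hii hq)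
      rw [hp0, hq0] at this
      simp only [Nat.zero_add, Nat.add_zero] at this
      exact hd n ⟨hn, this⟩
    · have h1 : hasW A (p + (n + q)) u u := hasW_comp A hp (hasW_comp A hii hq)
      have h2 : hasW A (p + q) u u := hasW_comp A hp hq
      have d1 := hd (p + (n + q)) ⟨by omega, h1⟩
      have d2 := hd (p + q) ⟨h0, h2⟩
      have : p + (n + q) = n + (p + q) := by omega
      rw [this] at d1
      exact (Nat.dvd_add_right d2).1 (by rwa [Nat.add_comm] at d1)

lemma exists_prim (herg : SErgodic A) (hedge : ∃ x y, A x y ≠ 0) :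
    ∃ s : ℕ, ∀ k m : V, 0 < (unsignedP A ^ s) k m := by
  classical
  have hwalk : ∀ i j : V, ∃ n, hasW A n i j := by
    intro i j
    obtain ⟨n, hn⟩ := herg.1 i j
    exact ⟨n, walk_hasW A hn⟩
  choose nf hnf using hwalk
  choose Bf hBf using closed_cofinite A herg hedge
  refine ⟨Finset.univ.sup (fun p : V × V => nf p.1 p.2 + Bf p.2), fun k m => ?_⟩
  set s := Finset.univ.sup (fun p : V × V => nf p.1 p.2 + Bf p.2) with hs
  have hle : nf k m + Bf m ≤ s :=
    Finset.le_sup (f := fun p : V × V => nf p.1 p.2 + Bf p.2) (Finset.mem_univ (k, m))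
  have h1 : hasW A (nf k m + (s - nf k m)) k m :=
    hasW_comp A (hnf k m) ((hBf m (s - nf k m) (by omega)).2)
  rwa [show nf k m + (s - nf k m) = s from by omega] at h1

lemma rowsum_mul_le (X Y : Matrix V V ℝ) (k : V) :
    ∑ j, |(X * Y) k j| ≤ ∑ m, |X k m| * ∑ j, |Y m j| := by
  calc ∑ j, |(X * Y) k j| = ∑ j, |∑ m, X k m * Y m j| := by
        simp only [Matrix.mul_apply]
    _ ≤ ∑ j, ∑ m, |X k m| * |Y m j| := by
        refine Finset.sum_le_sum fun j _ => ?_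
        calc |∑ m, X k m * Y m j| ≤ ∑ m, |X k m * Y m j| := Finset.abs_sum_le_sum_abs _ _
          _ = ∑ m, |X k m| * |Y m j| := by simp [abs_mul]
    _ = ∑ m, |X k m| * ∑ j, |Y m j| := by
        rw [Finset.sum_comm]
        simp [Finset.mul_sum]

lemma abs_rowsum_le (hd : ∀ i, 0 < sdeg A i) (n : ℕ) (k : V) :
    ∑ j, |(signedP A ^ n) k j| ≤ 1 := by
  calc ∑ j, |(signedP A ^ n) k j| ≤ ∑ j, (unsignedP A ^ n) k j :=
        Finset.sum_le_sum fun j _ => abs_sp_pow_le A n k j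
    _ = 1 := up_pow_rowsum A hd n k

end SU


/-- For an ergodic strictly unbalanced signed digraph, `P^t → 0`. -/
theorem strictly_unbalanced_powers_tendsto_zero {V : Type*} [Fintype V] [DecidableEq V]
    (A : Matrix V V ℝ)
    (herg : SErgodic A)
    (hnb : ¬ SBalancedM A) (hna : ¬ SAntiBalancedM A) :
    Tendsto (fun t => signedP A ^ t) atTop (nhds 0) := by
  classical
  -- there is at least one edge
  have hedge : ∃ x y, A x y ≠ 0 := by
    by_contra h
    push_neg at h
    exact hnb ⟨Set.univ, fun i j hij => (hij (h i j)).elim⟩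
  obtain ⟨x, y, hxy⟩ := hedge
  have hV : Nonempty V := ⟨x⟩
  -- every node has an outgoing edge
  have hd : ∀ i, 0 < sdeg A i := by
    intro i
    obtain ⟨n, hn⟩ := herg.1 i x
    have hw : DiWalk (fun a b => A a b ≠ 0) (n + 1) i y :=
      SU.diwalk_append hn ⟨y, hxy, rfl⟩
    obtain ⟨k, hk, -⟩ := hw
    exact SU.sdeg_pos_of_edge A hk
  -- cancellation pair
  obtain ⟨t0, i0, j0, hM0, hN0⟩ :
      ∃ t i0 j0, 0 < SU.Mw A t i0 j0 ∧ 0 < SU.Nw A t i0 j0 := by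
    by_contra hcon
    push_neg at hcon
    rcases SU.balanced_of_no_cancel A herg ⟨x, y, hxy⟩
      (fun t a b h => by
        have := hcon t a b
        exact absurd h.2 (by simpa using this h.1)) with h | h
    · exact hnb h
    · exact hna h
  -- primitivity
  obtain ⟨s, hs⟩ := SU.exists_prim A herg ⟨x, y, hxy⟩
  set T := s + t0 with hT
  have ht0 : 0 < t0 := by
    rcases Nat.eq_zero_or_pos t0 with h | h
    · exfalso
      rw [h] at hN0
      have : SU.Nw A 0 i0 j0 = 0 := by
        simp [SU.Nw]
      rw [this] at hN0
      exact lt_irrefl 0 hN0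
    · exact h
  have hTpos : 0 < T := by omega
  set δ : ℝ := min (SU.Mw A t0 i0 j0) (SU.Nw A t0 i0 j0) with hδ
  have hδpos : 0 < δ := lt_min hM0 hN0
  set ε : ℝ := Finset.univ.inf' Finset.univ_nonempty (fun k => (unsignedP A ^ s) k i0)
    with hε
  have hεpos : 0 < ε := by
    rw [hε, Finset.lt_inf'_iff]
    exact fun k _ => hs k i0
  have hεle : ∀ k, ε ≤ (unsignedP A ^ s) k i0 := by
    intro k
    exact Finset.inf'_le _ (Finset.mem_univ k)
  set c : ℝ := 1 - 2 * δ * ε with hc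
  -- row sum at i0 after t0 steps is at most 1 - 2δ
  have hrow0 : ∑ j, |(signedP A ^ t0) i0 j| ≤ 1 - 2 * δ := by
    have hkey : ∀ j, |(signedP A ^ t0) i0 j|
        ≤ (unsignedP A ^ t0) i0 j - (if j = j0 then 2 * δ else 0) := by
      intro j
      rcases eq_or_ne j j0 with rfl | hne
      · rw [if_pos rfl]
        have h1 : (signedP A ^ t0) i0 j = SU.Mw A t0 i0 j - SU.Nw A t0 i0 j := by
          rw [← SU.Mw_sub_Nw A t0]; rfl
        have h2 : (unsignedP A ^ t0) i0 j = SU.Mw A t0 i0 j + SU.Nw A t0 i0 j :=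
          SU.MN_entry A t0 i0 j
        rw [h1, h2]
        rcases le_total (SU.Mw A t0 i0 j) (SU.Nw A t0 i0 j) with h | h
        · rw [abs_of_nonpos (by linarith), hδ, min_eq_left h]; linarith
        · rw [abs_of_nonneg (by linarith), hδ, min_eq_right h]; linarith
      · rw [if_neg hne, sub_zero]
        exact SU.abs_sp_pow_le A t0 i0 j
    calc ∑ j, |(signedP A ^ t0) i0 j|
        ≤ ∑ j, ((unsignedP A ^ t0) i0 j - (if j = j0 then 2 * δ else 0)) :=
          Finset.sum_le_sum fun j _ => hkey j
      _ = (∑ j, (unsignedP A ^ t0) i0 j) - ∑ j, (if j = j0 then 2 * δ else 0) := by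
          rw [Finset.sum_sub_distrib]
      _ = 1 - 2 * δ := by
          rw [SU.up_pow_rowsum A hd, Finset.sum_ite_eq' Finset.univ j0 (fun _ => 2 * δ),
            if_pos (Finset.mem_univ j0)]
  -- contraction after T steps
  have hcrow : ∀ k, ∑ j, |(signedP A ^ T) k j| ≤ c := by
    intro k
    have h1 : signedP A ^ T = signedP A ^ s * signedP A ^ t0 := by
      rw [hT, pow_add]
    calc ∑ j, |(signedP A ^ T) k j|
        ≤ ∑ m, |(signedP A ^ s) k m| * ∑ j, |(signedP A ^ t0) m j| := by
          rw [h1]; exact SU.rowsum_mul_le _ _ k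
      _ ≤ ∑ m, (unsignedP A ^ s) k m * (1 - (if m = i0 then 2 * δ else 0)) := by
          refine Finset.sum_le_sum fun m _ => ?_
          have hb1 : |(signedP A ^ s) k m| ≤ (unsignedP A ^ s) k m :=
            SU.abs_sp_pow_le A s k m
          have hb2 : ∑ j, |(signedP A ^ t0) m j| ≤ 1 - (if m = i0 then 2 * δ else 0) := by
            rcases eq_or_ne m i0 with rfl | hne
            · rw [if_pos rfl]; exact hrow0
            · rw [if_neg hne, sub_zero]; exact SU.abs_rowsum_le A hd t0 m
          have hnn : 0 ≤ ∑ j, |(signedP A ^ t0) m j| :=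
            Finset.sum_nonneg fun j _ => abs_nonneg _
          exact mul_le_mul hb1 hb2 hnn (SU.up_pow_nonneg A s k m)
      _ = (∑ m, (unsignedP A ^ s) k m) - 2 * δ * (unsignedP A ^ s) k i0 := by
          simp only [mul_sub, mul_one, mul_ite, mul_zero]
          rw [Finset.sum_sub_distrib,
            Finset.sum_ite_eq' Finset.univ i0 (fun m => (unsignedP A ^ s) k m * (2 * δ))]
          rw [if_pos (Finset.mem_univ i0)]
          ring
      _ ≤ 1 - 2 * δ * ε := by
          rw [SU.up_pow_rowsum A hd]
          have := hεle k
          nlinarith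
  have hc1 : c < 1 := by
    rw [hc]
    nlinarith
  have hc0 : 0 ≤ c := by
    have h2δ : 2 * δ ≤ 1 := by
      have h1 : SU.Mw A t0 i0 j0 + SU.Nw A t0 i0 j0 ≤ 1 := by
        rw [← SU.MN_entry A t0 i0 j0]
        calc (unsignedP A ^ t0) i0 j0 ≤ ∑ j, (unsignedP A ^ t0) i0 j :=
              Finset.single_le_sum (f := fun j => (unsignedP A ^ t0) i0 j)
                (fun j _ => SU.up_pow_nonneg A t0 i0 j) (Finset.mem_univ j0)
          _ = 1 := SU.up_pow_rowsum A hd t0 i0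
      rw [hδ]
      rcases le_total (SU.Mw A t0 i0 j0) (SU.Nw A t0 i0 j0) with h | h
      · rw [min_eq_left h]; linarith
      · rw [min_eq_right h]; linarith
    have hε1 : ε ≤ 1 := by
      have h1 := hεle x
      calc ε ≤ (unsignedP A ^ s) x i0 := h1
        _ ≤ ∑ j, (unsignedP A ^ s) x j :=
            Finset.single_le_sum (f := fun j => (unsignedP A ^ s) x j)
              (fun j _ => SU.up_pow_nonneg A s x j) (Finset.mem_univ i0)
        _ = 1 := SU.up_pow_rowsum A hd s x
    rw [hc]
    nlinarith
  -- geometric decay of row sums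
  have hgeo : ∀ q k, ∑ j, |(signedP A ^ (T * q)) k j| ≤ c ^ q := by
    intro q
    induction q with
    | zero =>
      intro k
      simp only [Nat.mul_zero, pow_zero]
      have : ∑ j, |(1 : Matrix V V ℝ) k j| = 1 := by
        simp [Matrix.one_apply, apply_ite abs]
      rw [this]
    | succ q ih =>
      intro k
      have h1 : signedP A ^ (T * (q + 1)) = signedP A ^ T * signedP A ^ (T * q) := by
        rw [← pow_add]
        congr 1
        ring
      calc ∑ j, |(signedP A ^ (T * (q + 1))) k j|
          ≤ ∑ m, |(signedP A ^ T) k m| * ∑ j, |(signedP A ^ (T * q)) m j| := by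
            rw [h1]; exact SU.rowsum_mul_le _ _ k
        _ ≤ ∑ m, |(signedP A ^ T) k m| * c ^ q := by
            refine Finset.sum_le_sum fun m _ => ?_
            exact mul_le_mul_of_nonneg_left (ih m) (abs_nonneg _)
        _ = (∑ m, |(signedP A ^ T) k m|) * c ^ q := by
            rw [Finset.sum_mul]
        _ ≤ c * c ^ q :=
            mul_le_mul_of_nonneg_right (hcrow k) (pow_nonneg hc0 q)
        _ = c ^ (q + 1) := by rw [pow_succ]; ring
  -- entrywise bound for all times
  have hbound : ∀ t k j, |(signedP A ^ t) k j| ≤ c ^ (t / T) := by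
    intro t k j
    have hdecomp : t = T * (t / T) + t % T := (Nat.div_add_mod t T).symm
    have h1 : signedP A ^ t = signedP A ^ (T * (t / T)) * signedP A ^ (t % T) := by
      rw [← pow_add, ← hdecomp]
    rw [h1, Matrix.mul_apply]
    calc |∑ m, (signedP A ^ (T * (t / T))) k m * (signedP A ^ (t % T)) m j|
        ≤ ∑ m, |(signedP A ^ (T * (t / T))) k m * (signedP A ^ (t % T)) m j| :=
          Finset.abs_sum_le_sum_abs _ _
      _ ≤ ∑ m, |(signedP A ^ (T * (t / T))) k m| * 1 := by
          refine Finset.sum_le_sum fun m _ => ?_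
          rw [abs_mul]
          refine mul_le_mul_of_nonneg_left ?_ (abs_nonneg _)
          calc |(signedP A ^ (t % T)) m j| ≤ (unsignedP A ^ (t % T)) m j :=
                SU.abs_sp_pow_le A (t % T) m j
            _ ≤ ∑ l, (unsignedP A ^ (t % T)) m l :=
                Finset.single_le_sum (f := fun l => (unsignedP A ^ (t % T)) m l)
                  (fun l _ => SU.up_pow_nonneg A (t % T) m l) (Finset.mem_univ j)
            _ = 1 := SU.up_pow_rowsum A hd (t % T) m
      _ = ∑ m, |(signedP A ^ (T * (t / T))) k m| := by simp
      _ ≤ c ^ (t / T) := hgeo (t / T) k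
  -- conclude
  have hdiv : Tendsto (fun t : ℕ => t / T) atTop atTop := by
    apply Filter.tendsto_atTop_atTop.2
    intro b
    refine ⟨b * T, fun t ht => ?_⟩
    exact (Nat.le_div_iff_mul_le hTpos).2 ht
  have hpow : Tendsto (fun t : ℕ => c ^ (t / T)) atTop (nhds 0) :=
    (tendsto_pow_atTop_nhds_zero_of_lt_one hc0 hc1).comp hdiv
  have hentry : ∀ k j, Tendsto (fun t => (signedP A ^ t) k j) atTop (nhds 0) := by
    intro k j
    apply squeeze_zero_norm (fun t => ?_) hpow
    simpa [Real.norm_eq_abs] using hbound t k j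
  exact tendsto_pi_nhds.2 fun k => tendsto_pi_nhds.2 fun j => hentry k j
end

section
/- Let G=(V,E,A) be a signed digraph and G'=(V,E,-A) the digraph with all edge signs negated. For any initial white-color distribution x_0 and any even step 2t, the voter model distributions on G and G' coincide: x_{2t}(G) = x_{2t}(G'). -/
open Matrix Filter Topology Finset

/-- Negating all edge signs leaves the voter-model distribution unchanged at
every even step. -/
theorem voter_model_sign_negation_even_steps {V : Type*} [Fintype V] [DecidableEq V]
    (Apos Aneg : Matrix V V ℝ)
    (hpos : ∀ i j, 0 ≤ Apos i j) (hneg : ∀ i j, 0 ≤ Aneg i j)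
    (d : V → ℝ) (hd : ∀ i, d i = ∑ j, (Apos i j + Aneg i j)) (hdpos : ∀ i, 0 < d i)
    (P : Matrix V V ℝ) (hP : ∀ i j, P i j = (Apos i j - Aneg i j) / d i)
    (g g' : V → ℝ) (hg : ∀ i, g i = (∑ j, Aneg i j) / d i)
    (hg' : ∀ i, g' i = (∑ j, Apos i j) / d i)
    (x y : ℕ → V → ℝ) (h0 : y 0 = x 0)
    (hx : ∀ t, x (t + 1) = P.mulVec (x t) + g)
    (hy : ∀ t, y (t + 1) = (-P).mulVec (y t) + g') :
    ∀ t, y (2 * t) = x (2 * t) := by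
  have hsum : ∀ i, g i + g' i = 1 := by
    intro i
    rw [hg, hg', ← add_div, ← Finset.sum_add_distrib]
    have : ∑ j, (Aneg i j + Apos i j) = d i := by
      rw [hd]; exact Finset.sum_congr rfl fun j _ => by ring
    rw [this, div_self (hdpos i).ne']
  have hrow : ∀ i, ∑ j, P i j = g' i - g i := by
    intro i
    simp only [hP]
    rw [← Finset.sum_div, hg, hg', div_sub_div_same, Finset.sum_sub_distrib]
  have key : ∀ t, y (2 * t) = x (2 * t) ∧
      y (2 * t + 1) = fun i => 1 - x (2 * t + 1) i := by
    intro t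
    induction t with
    | zero =>
      constructor
      · simpa using h0
      · funext i
        rw [hx, hy]
        simp only [Pi.add_apply, Matrix.mulVec, Matrix.neg_apply, dotProduct]
        rw [h0]
        have : ∑ j, -P i j * x 0 j = -∑ j, P i j * x 0 j := by
          rw [← Finset.sum_neg_distrib]
          exact Finset.sum_congr rfl fun j _ => by ring
        rw [this]
        have := hsum i
        linarith
    | succ n ih =>
      obtain ⟨h1, h2⟩ := ih
      have heven : y (2 * (n + 1)) = x (2 * (n + 1)) := by
        have e1 : 2 * (n + 1) = (2 * n + 1) + 1 := by ring
        funext i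
        rw [e1, hx, hy, h2]
        simp only [Pi.add_apply, Matrix.mulVec, Matrix.neg_apply, dotProduct]
        have : ∑ j, -P i j * (1 - x (2 * n + 1) j)
            = -∑ j, P i j + ∑ j, P i j * x (2 * n + 1) j := by
          rw [← Finset.sum_neg_distrib, ← Finset.sum_add_distrib]
          exact Finset.sum_congr rfl fun j _ => by ring
        rw [this, hrow i]
        ring
      refine ⟨heven, ?_⟩
      funext i
      rw [hx, hy, heven]
      simp only [Pi.add_apply, Matrix.mulVec, Matrix.neg_apply, dotProduct]
      have : ∑ j, -P i j * x (2 * (n + 1)) j = -∑ j, P i j * x (2 * (n + 1)) j := by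
        rw [← Finset.sum_neg_distrib]
        exact Finset.sum_congr rfl fun j _ => by ring
      rw [this]
      have := hsum i
      linarith
  exact fun t => (key t).1
end

section
/- Let X ∈ R^{m×m}, Y ∈ R^{m×n}, Z ∈ R^{n×n} with lim_{t→∞} X^t = 0 and lim_{t→∞} Z^t = 0. Then lim_{t→∞} Σ_{i=0}^{t-1} X^i Y Z^{t-1-i} = 0. -/
open Matrix Filter Topology Finset


lemma geom_bound_of_tendsto_pow_zero {A : Type*} [NormedRing A] (a : A)
    (h : Tendsto (fun t => ‖a ^ t‖) atTop (nhds 0)) :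
    ∃ C r : ℝ, 0 < C ∧ 0 < r ∧ r < 1 ∧ ∀ k, ‖a ^ k‖ ≤ C * r ^ k := by
  obtain ⟨N₀, hN₀⟩ :=
    (h.eventually (eventually_lt_nhds (show (0:ℝ) < 1/2 by norm_num))).exists_forall_of_atTop
  set N : ℕ := max N₀ 1 with hNdef
  have hN1 : 1 ≤ N := le_max_right _ _
  have hc : ‖a ^ N‖ < 1/2 := hN₀ N (le_max_left _ _)
  have hcnn : 0 ≤ ‖a ^ N‖ := norm_nonneg _
  -- r = (1/2)^(1/N)
  set r : ℝ := (1/2 : ℝ) ^ ((N : ℝ)⁻¹) with hrdef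
  have hr0 : 0 < r := Real.rpow_pos_of_pos (by norm_num) _
  have hr1 : r < 1 := by
    apply Real.rpow_lt_one (by norm_num) (by norm_num)
    positivity
  -- M = max of ‖a^s‖ for s < N, plus 1
  set M : ℝ := (Finset.range N).sup' ⟨0, Finset.mem_range.mpr hN1⟩
      (fun s => ‖a ^ s‖) + 1 with hMdef
  have hM0 : 0 < M := by
    have : (0:ℝ) ≤ (Finset.range N).sup' ⟨0, Finset.mem_range.mpr hN1⟩ (fun s => ‖a ^ s‖) :=
      le_trans (norm_nonneg (a ^ 0)) (Finset.le_sup' (fun s => ‖a ^ s‖) (Finset.mem_range.mpr hN1))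
    linarith
  have hMle : ∀ s < N, ‖a ^ s‖ ≤ M := by
    intro s hs
    have := Finset.le_sup' (fun s => ‖a ^ s‖) (Finset.mem_range.mpr hs)
    linarith [this]
  refine ⟨2 * M, r, by positivity, hr0, hr1, fun k => ?_⟩
  obtain ⟨q, s, hs, rfl⟩ : ∃ q s, s < N ∧ k = N * q + s :=
    ⟨k / N, k % N, Nat.mod_lt _ (by omega), (Nat.div_add_mod k N).symm⟩
  have h1 : ‖a ^ (N * q + s)‖ ≤ (1/2) ^ q * M := by
    rcases Nat.eq_zero_or_pos q with hq | hq
    · subst hq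
      simpa using hMle s hs
    rw [pow_add, pow_mul]
    calc ‖(a ^ N) ^ q * a ^ s‖ ≤ ‖(a ^ N) ^ q‖ * ‖a ^ s‖ := norm_mul_le _ _
      _ ≤ ‖a ^ N‖ ^ q * M := by
          exact mul_le_mul (norm_pow_le' _ hq) (hMle s hs) (norm_nonneg _) (by positivity)
      _ ≤ (1/2) ^ q * M := by
          apply mul_le_mul_of_nonneg_right _ hM0.le
          exact pow_le_pow_left₀ hcnn hc.le q
  have h2 : (1/2 : ℝ) ^ q ≤ 2 * r ^ (N * q + s) := by
    have hrk : r ^ (N * q + s) = (1/2 : ℝ) ^ (((N * q + s : ℕ) : ℝ) * (N:ℝ)⁻¹) := by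
      rw [hrdef, ← Real.rpow_natCast (((1:ℝ)/2) ^ ((N:ℝ)⁻¹)) (N * q + s),
        ← Real.rpow_mul (by norm_num)]
      ring_nf
    rw [hrk]
    have hle : ((N * q + s : ℕ) : ℝ) * (N:ℝ)⁻¹ ≤ (q : ℝ) + 1 := by
      rw [mul_inv_le_iff₀ (by positivity)]
      push_cast
      nlinarith [(show (s:ℝ) < (N:ℝ) by exact_mod_cast hs), (show (1:ℝ) ≤ (N:ℝ) by exact_mod_cast hN1)]
    calc (1/2 : ℝ) ^ q = 2 * (1/2 : ℝ) ^ (((q:ℝ)) + 1) := by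
          rw [Real.rpow_add (by norm_num), Real.rpow_natCast, Real.rpow_one]; ring
      _ ≤ 2 * (1/2 : ℝ) ^ (((N * q + s : ℕ) : ℝ) * (N:ℝ)⁻¹) := by
          apply mul_le_mul_of_nonneg_left _ (by norm_num)
          exact Real.rpow_le_rpow_of_exponent_ge (by norm_num) (by norm_num) hle
  calc ‖a ^ (N * q + s)‖ ≤ (1/2) ^ q * M := h1
    _ ≤ (2 * r ^ (N * q + s)) * M := mul_le_mul_of_nonneg_right h2 hM0.le
    _ = 2 * M * r ^ (N * q + s) := by ring


attribute [local instance] Matrix.linftyOpNormedRing Matrix.linftyOpNormedAddCommGroup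

lemma nat_mul_pow_pred_tendsto {r : ℝ} (hr0 : 0 < r) (hr1 : r < 1) :
    Tendsto (fun t : ℕ => (t : ℝ) * r ^ (t - 1)) atTop (nhds 0) := by
  have hs : Tendsto (fun t : ℕ => (t : ℝ) * r ^ t) atTop (nhds 0) := by
    have := (summable_pow_mul_geometric_of_norm_lt_one 1
      (show ‖r‖ < 1 by rw [Real.norm_eq_abs, abs_of_pos hr0]; exact hr1)).tendsto_atTop_zero
    simpa using this
  have heq : (fun t : ℕ => (t : ℝ) * r ^ (t - 1)) = fun t : ℕ => r⁻¹ * ((t : ℝ) * r ^ t) := by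
    funext t
    rcases Nat.eq_zero_or_pos t with ht | ht
    · subst ht; simp
    · rw [← Nat.succ_pred_eq_of_pos ht]
      field_simp
      rw [Nat.succ_sub_one]
      exact (pow_succ r t.pred).symm
  rw [heq]
  simpa using hs.const_mul r⁻¹

/-- If `X^t → 0` and `Z^t → 0`, then `Σ_{i=0}^{t-1} X^i Y Z^{t-1-i} → 0`. -/
theorem mixed_power_series_tendsto_zero {m n : ℕ}
    (X : Matrix (Fin m) (Fin m) ℝ) (Y : Matrix (Fin m) (Fin n) ℝ)
    (Z : Matrix (Fin n) (Fin n) ℝ)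
    (hX : Tendsto (fun t => X ^ t) atTop (nhds 0))
    (hZ : Tendsto (fun t => Z ^ t) atTop (nhds 0)) :
    Tendsto (fun t => ∑ i ∈ Finset.range t, X ^ i * Y * Z ^ (t - 1 - i)) atTop
      (nhds 0) := by
  have hXn : Tendsto (fun t => ‖X ^ t‖) atTop (nhds 0) := by simpa using hX.norm
  have hZn : Tendsto (fun t => ‖Z ^ t‖) atTop (nhds 0) := by simpa using hZ.norm
  obtain ⟨Cx, rx, hCx, hrx0, hrx1, hbx⟩ := geom_bound_of_tendsto_pow_zero X hXn
  obtain ⟨Cz, rz, hCz, hrz0, hrz1, hbz⟩ := geom_bound_of_tendsto_pow_zero Z hZn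
  set r : ℝ := max rx rz with hrdef
  have hr0 : 0 < r := lt_max_of_lt_left hrx0
  have hr1 : r < 1 := max_lt hrx1 hrz1
  set K : ℝ := Cx * ‖Y‖ * Cz with hKdef
  have hK0 : 0 ≤ K := by positivity
  have hbound : ∀ t : ℕ,
      ‖∑ i ∈ Finset.range t, X ^ i * Y * Z ^ (t - 1 - i)‖ ≤ (t : ℝ) * (K * r ^ (t - 1)) := by
    intro t
    calc ‖∑ i ∈ Finset.range t, X ^ i * Y * Z ^ (t - 1 - i)‖
        ≤ ∑ i ∈ Finset.range t, ‖X ^ i * Y * Z ^ (t - 1 - i)‖ := norm_sum_le _ _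
      _ ≤ ∑ i ∈ Finset.range t, K * r ^ (t - 1) := by
          apply Finset.sum_le_sum
          intro i hi
          rw [Finset.mem_range] at hi
          have h1 : ‖X ^ i * Y * Z ^ (t - 1 - i)‖ ≤ ‖X ^ i‖ * ‖Y‖ * ‖Z ^ (t - 1 - i)‖ :=
            le_trans (Matrix.linfty_opNorm_mul _ _)
              (mul_le_mul_of_nonneg_right (Matrix.linfty_opNorm_mul _ _) (norm_nonneg _))
          have h2 : ‖X ^ i‖ * ‖Y‖ * ‖Z ^ (t - 1 - i)‖ ≤
              (Cx * rx ^ i) * ‖Y‖ * (Cz * rz ^ (t - 1 - i)) := by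
            have := hbx i
            have := hbz (t - 1 - i)
            have h3 : (0:ℝ) ≤ Cx * rx ^ i := by positivity
            apply mul_le_mul
            · exact mul_le_mul_of_nonneg_right (hbx i) (norm_nonneg _)
            · exact hbz _
            · exact norm_nonneg _
            · positivity
          have h4 : (Cx * rx ^ i) * ‖Y‖ * (Cz * rz ^ (t - 1 - i)) ≤ K * r ^ (t - 1) := by
            have hxr : rx ^ i ≤ r ^ i := pow_le_pow_left₀ hrx0.le (le_max_left _ _) i
            have hzr : rz ^ (t - 1 - i) ≤ r ^ (t - 1 - i) :=
              pow_le_pow_left₀ hrz0.le (le_max_right _ _) _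
            have hiexp : i + (t - 1 - i) = t - 1 := by omega
            calc (Cx * rx ^ i) * ‖Y‖ * (Cz * rz ^ (t - 1 - i))
                ≤ (Cx * r ^ i) * ‖Y‖ * (Cz * r ^ (t - 1 - i)) := by
                  apply mul_le_mul
                  · exact mul_le_mul_of_nonneg_right
                      (mul_le_mul_of_nonneg_left hxr hCx.le) (norm_nonneg _)
                  · exact mul_le_mul_of_nonneg_left hzr hCz.le
                  · positivity
                  · positivity
              _ = K * r ^ (t - 1) := by
                  have hpp : r ^ i * r ^ (t - 1 - i) = r ^ (t - 1) := by
                    rw [← pow_add, hiexp]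
                  rw [hKdef, ← hpp]; ring
          linarith
      _ = (t : ℝ) * (K * r ^ (t - 1)) := by
          rw [Finset.sum_const, Finset.card_range, nsmul_eq_mul]
  have hg : Tendsto (fun t : ℕ => (t : ℝ) * (K * r ^ (t - 1))) atTop (nhds 0) := by
    have := (nat_mul_pow_pred_tendsto hr0 hr1).const_mul K
    simpa [mul_comm, mul_assoc, mul_left_comm] using this
  exact squeeze_zero_norm hbound hg
end

section
/- If G is a balanced ergodic signed digraph with partition S, S̄, then the two polarized states (all of S white and all of S̄ black, or all of S black and all of S̄ white) are fixed points (equilibrium states) of the voter model dynamic x ↦ P x + g^-. -/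
open Matrix Filter Topology Finset

lemma exists_edge_of_ergodic {V : Type*} (A : Matrix V V ℝ) (herg : SErgodic A) (i : V) :
    ∃ j, A i j ≠ 0 := by
  obtain ⟨hsc, hap⟩ := herg
  by_contra h
  push_neg at h
  have hcw : ∃ n : ℕ, 0 < n ∧ ∃ v, DiWalk (fun a b => A a b ≠ 0) n v v := by
    by_contra hc
    push_neg at hc
    have h2 := hap 2 (fun n hn hw => absurd hw (by
      push_neg; intro v; exact hc n hn v))
    omega
  obtain ⟨n, hn, v, hw⟩ := hcw
  obtain ⟨m, hm⟩ := hsc i v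
  cases m with
  | zero =>
    have : i = v := hm
    subst this
    cases n with
    | zero => omega
    | succ n =>
      obtain ⟨k, hk, _⟩ := hw
      exact hk (h k)
  | succ m =>
    obtain ⟨k, hk, _⟩ := hm
    exact hk (h k)

lemma sdeg_pos_of_edge {V : Type*} [Fintype V] (A : Matrix V V ℝ) (i : V)
    (h : ∃ j, A i j ≠ 0) : 0 < sdeg A i := by
  obtain ⟨j, hj⟩ := h
  have h1 : 0 < |A i j| := abs_pos.mpr hj
  unfold sdeg
  exact lt_of_lt_of_le h1
    (Finset.single_le_sum (fun k _ => abs_nonneg (A i k)) (Finset.mem_univ j))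

lemma entry_eq_aux (a : ℝ) (P Q : Prop) [Decidable P] [Decidable Q]
    (h : a ≠ 0 → (0 < a ↔ (P ↔ Q))) :
    a * (if Q then (1:ℝ) else 0) + max (-a) 0 = (if P then (1:ℝ) else 0) * |a| := by
  rcases eq_or_ne a 0 with rfl | ha
  · simp
  · have hb := h ha
    rcases ha.lt_or_gt with hneg | hpos
    · have hPQ : ¬ (P ↔ Q) := fun hpq => absurd (hb.mpr hpq) (by linarith)
      rw [abs_of_neg hneg, max_eq_left (by linarith)]
      by_cases hP : P <;> by_cases hQ : Q
      · exact absurd (Iff.intro (fun _ => hQ) (fun _ => hP)) hPQ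
      · simp [hP, hQ]
      · simp [hP, hQ]
      · exact absurd (Iff.intro (fun h => absurd h hP) (fun h => absurd h hQ)) hPQ
    · have hPQ : P ↔ Q := hb.mp hpos
      rw [abs_of_pos hpos, max_eq_right (by linarith)]
      by_cases hP : P <;> by_cases hQ : Q
      · simp [hP, hQ]
      · exact absurd (hPQ.mp hP) hQ
      · exact absurd (hPQ.mpr hQ) hP
      · simp [hP, hQ]

lemma fixed_point_aux {V : Type*} [Fintype V] (A : Matrix V V ℝ) (herg : SErgodic A)
    (P : V → Prop) [DecidablePred P]
    (h : ∀ i j, A i j ≠ 0 → (0 < A i j ↔ (P i ↔ P j))) :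
    (signedP A).mulVec (fun i => if P i then (1:ℝ) else 0) + gneg A
      = fun i => if P i then (1:ℝ) else 0 := by
  funext i
  have hd : 0 < sdeg A i := sdeg_pos_of_edge A i (exists_edge_of_ergodic A herg i)
  show (∑ j, signedP A i j * (if P j then (1:ℝ) else 0)) + gneg A i
      = if P i then (1:ℝ) else 0
  have h1 : ∀ j, signedP A i j * (if P j then (1:ℝ) else 0)
      = (A i j * (if P j then (1:ℝ) else 0)) / sdeg A i := by
    intro j
    simp only [signedP, Matrix.of_apply, div_mul_eq_mul_div]
  simp only [h1, gneg, ← Finset.sum_div]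
  rw [← add_div, ← Finset.sum_add_distrib]
  have h2 : ∀ j ∈ Finset.univ, A i j * (if P j then (1:ℝ) else 0) + max (-(A i j)) 0
      = (if P i then (1:ℝ) else 0) * |A i j| := fun j _ => entry_eq_aux _ _ _ (h i j)
  rw [Finset.sum_congr rfl h2, ← Finset.mul_sum]
  show (if P i then (1:ℝ) else 0) * sdeg A i / sdeg A i = _
  rw [mul_div_assoc, div_self hd.ne', mul_one]

/-- In a balanced ergodic signed digraph the two polarized states are fixed
points of the voter model map `x ↦ Px + g⁻`. -/
theorem balanced_polarized_states_are_fixed_points {V : Type*} [Fintype V] [DecidableEq V]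
    (A : Matrix V V ℝ) (S : Finset V)
    (herg : SErgodic A)
    (hbal : ∀ i j, A i j ≠ 0 → (0 < A i j ↔ (i ∈ S ↔ j ∈ S))) :
    ((signedP A).mulVec (fun i => if i ∈ S then (1 : ℝ) else 0) + gneg A
        = fun i => if i ∈ S then (1 : ℝ) else 0) ∧
    ((signedP A).mulVec (fun i => if i ∈ S then (0 : ℝ) else 1) + gneg A
        = fun i => if i ∈ S then (0 : ℝ) else 1) := by
  constructor
  · exact fixed_point_aux A herg (fun i => i ∈ S) hbal
  · have key := fixed_point_aux A herg (fun i => i ∉ S)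
      (fun i j hij => by rw [hbal i j hij]; tauto)
    have hvec : (fun i => if i ∉ S then (1:ℝ) else 0)
        = fun i => if i ∈ S then (0:ℝ) else 1 := by
      funext i; by_cases h : i ∈ S <;> simp [h]
    rw [hvec] at key
    exact key
end
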